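/- arXiv:1608.00483 — 5 statements merged into one kernel-verified Lean document; each statement's English description precedes it below -/
import Mathlib

section
/- (Key Lemma) Let K be a Kan complex, let c = (x_0,…,x_{k-1}, y, x_{k+1},…, x_n) be an (n-1)-boundary in K, and let y' ∈ K_{n-1} satisfy ∂y' = ∂y (so that c' = (x_0,…,x_{k-1}, y', x_{k+1},…, x_n) is an (n-1)-cycle). Then c' is an (n-1)-boundary if and only if y is homotopic to y'. -/
/-- A simplicial set, given combinatorially by sets of `n`-simplices together with
face operators `d i : K_{n+1} → K_n` (`i ≤ n+1`) and degeneracy operators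
`s i : K_n → K_{n+1}` (`i ≤ n`) satisfying the simplicial identities.
(The operators are indexed by natural numbers; their values at out-of-range
indices are irrelevant.) -/
structure SSetC where
  obj : ℕ → Type
  d : (n : ℕ) → ℕ → obj (n + 1) → obj n
  s : (n : ℕ) → ℕ → obj n → obj (n + 1)
  dd : ∀ (n i j : ℕ), i < j → j ≤ n + 2 → ∀ x : obj (n + 2),
      d n i (d (n + 1) j x) = d n (j - 1) (d (n + 1) i x)
  ss : ∀ (n i j : ℕ), i ≤ j → j ≤ n → ∀ x : obj n,
      s (n + 1) i (s n j x) = s (n + 1) (j + 1) (s n i x)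
  ds_lt : ∀ (n i j : ℕ), i < j → j ≤ n + 1 → ∀ x : obj (n + 1),
      d (n + 1) i (s (n + 1) j x) = s n (j - 1) (d n i x)
  ds_self : ∀ (n i : ℕ), i ≤ n → ∀ x : obj n, d n i (s n i x) = x
  ds_succ : ∀ (n i : ℕ), i ≤ n → ∀ x : obj n, d n (i + 1) (s n i x) = x
  ds_gt : ∀ (n i j : ℕ), j + 1 < i → i ≤ n + 2 → ∀ x : obj (n + 1),
      d (n + 1) i (s (n + 1) j x) = s n j (d n (i - 1) x)

namespace SSetC

variable (K : SSetC)

/-- The boundary `∂x = (d_0 x, …, d_{m+1} x)` of an `(m+1)`-simplex. -/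
def bdry {m : ℕ} (x : K.obj (m + 1)) : Fin (m + 2) → K.obj m := fun i => K.d m i x

/-- An `(m+2)`-tuple of `m`-simplices is an `m`-boundary if it is the boundary of
some `(m+1)`-simplex. -/
def IsBoundary {m : ℕ} (c : Fin (m + 2) → K.obj m) : Prop :=
  ∃ x : K.obj (m + 1), K.bdry x = c

/-- An `(m+2)`-tuple of `m`-simplices is compatible (an `m`-cycle) if
`d_i x_j = d_{j-1} x_i` for all `i < j` (a vacuous condition for `m = 0`). -/
def Compat : ∀ {m : ℕ}, (Fin (m + 2) → K.obj m) → Prop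
  | 0 => fun _ => True
  | m + 1 => fun c => ∀ i j : Fin (m + 3), (i : ℕ) < (j : ℕ) →
      K.d m i (c j) = K.d m ((j : ℕ) - 1) (c i)

/-- Compatibility of an `(m,k)`-horn: the entry at position `k` is disregarded. -/
def HornCompat : ∀ {m : ℕ}, ℕ → (Fin (m + 2) → K.obj m) → Prop
  | 0 => fun _ _ => True
  | m + 1 => fun k c => ∀ i j : Fin (m + 3), (i : ℕ) ≠ k → (j : ℕ) ≠ k → (i : ℕ) < (j : ℕ) →
      K.d m i (c j) = K.d m ((j : ℕ) - 1) (c i)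

/-- A simplicial set is a Kan complex if every horn has a filling. -/
def IsKan : Prop :=
  ∀ (m k : ℕ), k ≤ m + 1 → ∀ c : Fin (m + 2) → K.obj m, K.HornCompat k c →
    ∃ x : K.obj (m + 1), ∀ i : Fin (m + 2), (i : ℕ) ≠ k → K.d m i x = c i

/-- The cycle `(s_{n-1} d_0 x, …, s_{n-1} d_{n-1} x, x, y)` used to define homotopy
of `n`-simplices (for `n = 0` it is just `(x, y)`). -/
def homotopyTuple : ∀ {n : ℕ}, K.obj n → K.obj n → Fin (n + 2) → K.obj n
  | 0 => fun x y => ![x, y]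
  | n + 1 => fun x y i =>
      if (i : ℕ) < n + 1 then K.s n n (K.d n i x)
      else if (i : ℕ) = n + 1 then x else y

/-- Two `n`-simplices (with the same boundary) are homotopic if the corresponding
cycle is a boundary. -/
def Homotopic {n : ℕ} (x y : K.obj n) : Prop :=
  K.IsBoundary (K.homotopyTuple x y)

/-- `∂x = ∂y` (a vacuous condition for vertices). -/
def SameBdry : ∀ {n : ℕ}, K.obj n → K.obj n → Prop
  | 0 => fun _ _ => True
  | _ + 1 => fun x y => K.bdry x = K.bdry y

/-- The simplex `⋆_n` of the subcomplex generated by a base point. -/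
def basept (b : K.obj 0) : ∀ n : ℕ, K.obj n
  | 0 => b
  | n + 1 => K.s n 0 (basept b n)

lemma basept_succ (b : K.obj 0) (n : ℕ) : K.basept b (n + 1) = K.s n 0 (K.basept b n) := rfl

lemma s_basept (b : K.obj 0) : ∀ n i : ℕ, i ≤ n → K.s n i (K.basept b n) = K.basept b (n + 1) := by
  intro n
  induction n with
  | zero => intro i hi; interval_cases i; rfl
  | succ n ih =>
    intro i hi
    match i, hi with
    | 0, _ => rfl
    | (i + 1), hi =>
      have h1 : K.basept b (n + 1) = K.s n 0 (K.basept b n) := rfl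
      rw [h1, ← K.ss n 0 i (Nat.zero_le _) (by omega), ih i (by omega)]
      exact (K.basept_succ b (n + 1)).symm

lemma d_basept (b : K.obj 0) : ∀ n i : ℕ, i ≤ n + 1 → K.d n i (K.basept b (n + 1)) = K.basept b n := by
  intro n
  induction n with
  | zero =>
    intro i hi
    interval_cases i
    · exact K.ds_self 0 0 (le_refl 0) b
    · exact K.ds_succ 0 0 (le_refl 0) b
  | succ n ih =>
    intro i hi
    match i, hi with
    | 0, _ => exact K.ds_self (n + 1) 0 (Nat.zero_le _) _
    | 1, _ => exact K.ds_succ (n + 1) 0 (Nat.zero_le _) _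
    | (i + 2), hi =>
      have h1 : K.basept b (n + 1 + 1) = K.s (n + 1) 0 (K.basept b (n + 1)) := rfl
      rw [h1, K.ds_gt n (i + 2) 0 (by omega) (by omega)]
      show K.s n 0 (K.d n (i + 1) (K.basept b (n + 1))) = _
      rw [ih (i + 1) (by omega), K.s_basept b n 0 (Nat.zero_le _)]

/-- An `(m+1)`-simplex is spherical if all of its faces are the base point. -/
def IsSph (b : K.obj 0) {m : ℕ} (x : K.obj (m + 1)) : Prop :=
  ∀ i : Fin (m + 2), K.d m i x = K.basept b m

/-- Sphericality for simplices of arbitrary dimension (vacuous for vertices). -/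
def IsSph' (b : K.obj 0) : ∀ {n : ℕ}, K.obj n → Prop
  | 0 => fun _ => True
  | _ + 1 => fun x => K.IsSph b x

lemma basept_isSph (b : K.obj 0) (m : ℕ) : K.IsSph b (K.basept b (m + 1)) :=
  fun i => K.d_basept b m i (Nat.lt_succ_iff.mp i.isLt)

/-- The cycle `(⋆, …, ⋆, y, z, x)` witnessing `[x][y] = [z]` in `π_{m+1}`. -/
def mulTuple (b : K.obj 0) {m : ℕ} (x y z : K.obj (m + 1)) : Fin (m + 3) → K.obj (m + 1) :=
  fun i =>
    if (i : ℕ) < m then K.basept b (m + 1)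
    else if (i : ℕ) = m then y
    else if (i : ℕ) = m + 1 then z
    else x

/-- `z` is a product of `x` and `y` in the sense of the homotopy group `π_{m+1}`. -/
def MulWitness (b : K.obj 0) {m : ℕ} (x y z : K.obj (m + 1)) : Prop :=
  K.IsBoundary (K.mulTuple b x y z)

/-- Spherical `(m+1)`-simplices: the representatives of `π_{m+1}(K,⋆)`. -/
def Sph (b : K.obj 0) (m : ℕ) := {x : K.obj (m + 1) // K.IsSph b x}

/-- The homotopy group `π_{m+1}(K,⋆)` as a quotient set. -/
def piGrp (b : K.obj 0) (m : ℕ) := Quot (fun x y : K.Sph b m => K.Homotopic x.1 y.1)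

/-- The homotopy class of a spherical simplex. -/
def cls (b : K.obj 0) (m : ℕ) (x : K.Sph b m) : K.piGrp b m := Quot.mk _ x

/-- A binary operation on `π_{m+1}(K,⋆)` is induced by horn filling if it sends
classes of `x` and `y` to the class of any product witness `z`. -/
def MulDescends (b : K.obj 0) (m : ℕ) (mul : K.piGrp b m → K.piGrp b m → K.piGrp b m) : Prop :=
  ∀ x y z : K.Sph b m, K.MulWitness b x.1 y.1 z.1 → mul (K.cls b m x) (K.cls b m y) = K.cls b m z

/-- A Kan complex is minimal if homotopic simplices with equal boundaries are equal. -/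
def Minimal : Prop :=
  ∀ (n : ℕ) (x y : K.obj n), K.SameBdry x y → K.Homotopic x y → x = y

end SSetC

namespace SSetCAux

open SSetC

/-! ### Clean forms of the simplicial identities -/

private lemma dsA (K : SSetC) (m a : ℕ) (ha : a ≤ m) (x : K.obj (m + 1)) :
    K.d (m + 1) a (K.s (m + 1) (m + 1) x) = K.s m m (K.d m a x) :=
  K.ds_lt m a (m + 1) (by omega) (by omega) x

private lemma dsB (K : SSetC) (m : ℕ) (x : K.obj (m + 1)) :
    K.d (m + 1) (m + 1) (K.s (m + 1) (m + 1) x) = x :=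
  K.ds_self (m + 1) (m + 1) (by omega) x

private lemma dsC (K : SSetC) (m : ℕ) (x : K.obj (m + 1)) :
    K.d (m + 1) (m + 2) (K.s (m + 1) (m + 1) x) = x :=
  K.ds_succ (m + 1) (m + 1) (by omega) x

private lemma dsA' (K : SSetC) (m a : ℕ) (ha : a < m) (x : K.obj (m + 1)) :
    K.d (m + 1) a (K.s (m + 1) m x) = K.s m (m - 1) (K.d m a x) :=
  K.ds_lt m a m ha (by omega) x

private lemma dsB' (K : SSetC) (m : ℕ) (x : K.obj (m + 1)) :
    K.d (m + 1) m (K.s (m + 1) m x) = x :=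
  K.ds_self (m + 1) m (by omega) x

private lemma dsC' (K : SSetC) (m : ℕ) (x : K.obj (m + 1)) :
    K.d (m + 1) (m + 1) (K.s (m + 1) m x) = x :=
  K.ds_succ (m + 1) m (by omega) x

private lemma dsD' (K : SSetC) (m : ℕ) (x : K.obj (m + 1)) :
    K.d (m + 1) (m + 2) (K.s (m + 1) m x) = K.s m m (K.d m (m + 1) x) :=
  K.ds_gt m (m + 2) m (by omega) (by omega) x

private lemma dd' (K : SSetC) (n i j : ℕ) (hij : i ≤ j) (hj : j + 1 ≤ n + 2)
    (x : K.obj (n + 2)) :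
    K.d n i (K.d (n + 1) (j + 1) x) = K.d n j (K.d (n + 1) i x) := by
  have h := K.dd n i (j + 1) (by omega) (by omega) x
  simpa using h

/-! ### Evaluation of the homotopy tuple -/

private lemma htup_lt (K : SSetC) (m : ℕ) (x y : K.obj (m + 1)) (i : ℕ) (hi : i < m + 3)
    (h : i < m + 1) : K.homotopyTuple x y ⟨i, hi⟩ = K.s m m (K.d m i x) := by
  show (if i < m + 1 then K.s m m (K.d m i x) else if i = m + 1 then x else y) = _
  rw [if_pos h]

private lemma htup_m1 (K : SSetC) (m : ℕ) (x y : K.obj (m + 1)) (i : ℕ) (hi : i < m + 3)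
    (h : i = m + 1) : K.homotopyTuple x y ⟨i, hi⟩ = x := by
  show (if i < m + 1 then K.s m m (K.d m i x) else if i = m + 1 then x else y) = _
  rw [if_neg (by omega), if_pos h]

private lemma htup_m2 (K : SSetC) (m : ℕ) (x y : K.obj (m + 1)) (i : ℕ) (hi : i < m + 3)
    (h : i = m + 2) : K.homotopyTuple x y ⟨i, hi⟩ = y := by
  show (if i < m + 1 then K.s m m (K.d m i x) else if i = m + 1 then x else y) = _
  rw [if_neg (by omega), if_neg (by omega)]

/-! ### The horn tuples used below -/

private def tupz (K : SSetC) (m a b l : ℕ) (p q u : K.obj (m + 2)) :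
    Fin (m + 4) → K.obj (m + 2) := fun i =>
  if (i : ℕ) = a then p else if (i : ℕ) = b then q
  else K.s (m + 1) l (K.d (m + 1) (i : ℕ) u)

private lemma tupz_a (K : SSetC) (m a b l : ℕ) (p q u : K.obj (m + 2)) (i : ℕ)
    (hi : i < m + 4) (h : i = a) : tupz K m a b l p q u ⟨i, hi⟩ = p := by
  show (if i = a then p else if i = b then q else K.s (m + 1) l (K.d (m + 1) i u)) = p
  rw [if_pos h]

private lemma tupz_b (K : SSetC) (m a b l : ℕ) (p q u : K.obj (m + 2)) (i : ℕ)
    (hi : i < m + 4) (h1 : i ≠ a) (h2 : i = b) : tupz K m a b l p q u ⟨i, hi⟩ = q := by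
  show (if i = a then p else if i = b then q else K.s (m + 1) l (K.d (m + 1) i u)) = q
  rw [if_neg h1, if_pos h2]

private lemma tupz_f (K : SSetC) (m a b l : ℕ) (p q u : K.obj (m + 2)) (i : ℕ)
    (hi : i < m + 4) (h1 : i ≠ a) (h2 : i ≠ b) :
    tupz K m a b l p q u ⟨i, hi⟩ = K.s (m + 1) l (K.d (m + 1) i u) := by
  show (if i = a then p else if i = b then q else K.s (m + 1) l (K.d (m + 1) i u)) = _
  rw [if_neg h1, if_neg h2]

private lemma fwd (K : SSetC) (hK : K.IsKan) (m k : ℕ) (hk : k ≤ m + 2)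
    (u u' : K.obj (m + 2))
    (hag : ∀ i : ℕ, i ≤ m + 2 → i ≠ k → K.d (m + 1) i u' = K.d (m + 1) i u) :
    K.Homotopic (K.d (m + 1) k u) (K.d (m + 1) k u') := by
  rcases Nat.lt_or_ge k (m + 2) with hkA | hkB
  · -- Case A : k ≤ m + 1.  Horn tuple: s-degeneracies, u at m+2, u' at m+3, hole at k.
    have hcom : K.HornCompat k (tupz K m (m + 2) (m + 3) (m + 1) u u' u) := by
      show ∀ i j : Fin (m + 4), (i : ℕ) ≠ k → (j : ℕ) ≠ k → (i : ℕ) < (j : ℕ) →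
        K.d (m + 1) (i : ℕ) (tupz K m (m + 2) (m + 3) (m + 1) u u' u j) =
          K.d (m + 1) ((j : ℕ) - 1) (tupz K m (m + 2) (m + 3) (m + 1) u u' u i)
      rintro ⟨iv, hi⟩ ⟨jv, hj⟩ hik hjk hij
      replace hik : iv ≠ k := hik
      replace hjk : jv ≠ k := hjk
      replace hij : iv < jv := hij
      show K.d (m + 1) iv (tupz K m (m + 2) (m + 3) (m + 1) u u' u ⟨jv, hj⟩) =
        K.d (m + 1) (jv - 1) (tupz K m (m + 2) (m + 3) (m + 1) u u' u ⟨iv, hi⟩)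
      rcases (by omega : jv ≤ m + 1 ∨ jv = m + 2 ∨ jv = m + 3) with hc | hc | hc
      · rw [tupz_f K m (m + 2) (m + 3) (m + 1) u u' u jv hj (by omega) (by omega),
            tupz_f K m (m + 2) (m + 3) (m + 1) u u' u iv hi (by omega) (by omega),
            dsA K m iv (by omega), dsA K m (jv - 1) (by omega),
            K.dd m iv jv hij (by omega)]
      · subst hc
        show K.d (m + 1) iv (tupz K m (m + 2) (m + 3) (m + 1) u u' u ⟨m + 2, hj⟩) =
          K.d (m + 1) (m + 1) (tupz K m (m + 2) (m + 3) (m + 1) u u' u ⟨iv, hi⟩)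
        rw [tupz_a K m (m + 2) (m + 3) (m + 1) u u' u (m + 2) hj rfl,
            tupz_f K m (m + 2) (m + 3) (m + 1) u u' u iv hi (by omega) (by omega),
            dsB K m]
      · subst hc
        show K.d (m + 1) iv (tupz K m (m + 2) (m + 3) (m + 1) u u' u ⟨m + 3, hj⟩) =
          K.d (m + 1) (m + 2) (tupz K m (m + 2) (m + 3) (m + 1) u u' u ⟨iv, hi⟩)
        rw [tupz_b K m (m + 2) (m + 3) (m + 1) u u' u (m + 3) hj (by omega) rfl]
        rcases (by omega : iv ≤ m + 1 ∨ iv = m + 2) with hd | hd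
        · rw [tupz_f K m (m + 2) (m + 3) (m + 1) u u' u iv hi (by omega) (by omega),
              dsC K m, hag iv (by omega) hik]
        · subst hd
          rw [tupz_a K m (m + 2) (m + 3) (m + 1) u u' u (m + 2) hi rfl,
              hag (m + 2) (by omega) hik]
    obtain ⟨W, hW⟩ := hK (m + 2) k (by omega) _ hcom
    have hW' : ∀ (i : ℕ) (hi : i < m + 4), i ≠ k →
        K.d (m + 2) i W = tupz K m (m + 2) (m + 3) (m + 1) u u' u ⟨i, hi⟩ :=
      fun i hi h => hW ⟨i, hi⟩ h
    refine ⟨K.d (m + 2) k W, ?_⟩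
    funext i
    obtain ⟨iv, hi⟩ := i
    show K.d (m + 1) iv (K.d (m + 2) k W) =
      K.homotopyTuple (K.d (m + 1) k u) (K.d (m + 1) k u') ⟨iv, hi⟩
    rcases Nat.lt_or_ge iv k with hivk | hivk
    · rw [htup_lt K m _ _ iv hi (by omega),
          K.dd (m + 1) iv k hivk (by omega) W,
          hW' iv (by omega) (by omega),
          tupz_f K m (m + 2) (m + 3) (m + 1) u u' u iv (by omega) (by omega) (by omega),
          dsA K m (k - 1) (by omega), ← K.dd m iv k hivk (by omega) u]
    · have e2 := (dd' K (m + 1) k iv hivk (by omega) W).symm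
      rw [e2, hW' (iv + 1) (by omega) (by omega)]
      rcases (by omega : iv + 1 ≤ m + 1 ∨ iv = m + 1 ∨ iv = m + 2) with hd | hd | hd
      · rw [tupz_f K m (m + 2) (m + 3) (m + 1) u u' u (iv + 1) (by omega) (by omega) (by omega),
            dsA K m k (by omega), dd' K m k iv hivk (by omega) u,
            htup_lt K m _ _ iv hi (by omega)]
      · rw [tupz_a K m (m + 2) (m + 3) (m + 1) u u' u (iv + 1) (by omega) (by omega),
            htup_m1 K m _ _ iv hi (by omega)]
      · rw [tupz_b K m (m + 2) (m + 3) (m + 1) u u' u (iv + 1) (by omega) (by omega) (by omega),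
            htup_m2 K m _ _ iv hi (by omega)]
  · -- Case B : k = m + 2.  Horn tuple: s-degeneracies, u at m+1, u' at m+2, hole at m+3.
    have hkB' : k = m + 2 := by omega
    subst hkB'
    have hcom : K.HornCompat (m + 3) (tupz K m (m + 1) (m + 2) m u u' u) := by
      show ∀ i j : Fin (m + 4), (i : ℕ) ≠ m + 3 → (j : ℕ) ≠ m + 3 → (i : ℕ) < (j : ℕ) →
        K.d (m + 1) (i : ℕ) (tupz K m (m + 1) (m + 2) m u u' u j) =
          K.d (m + 1) ((j : ℕ) - 1) (tupz K m (m + 1) (m + 2) m u u' u i)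
      rintro ⟨iv, hi⟩ ⟨jv, hj⟩ hik hjk hij
      replace hik : iv ≠ m + 3 := hik
      replace hjk : jv ≠ m + 3 := hjk
      replace hij : iv < jv := hij
      show K.d (m + 1) iv (tupz K m (m + 1) (m + 2) m u u' u ⟨jv, hj⟩) =
        K.d (m + 1) (jv - 1) (tupz K m (m + 1) (m + 2) m u u' u ⟨iv, hi⟩)
      rcases (by omega : jv ≤ m ∨ jv = m + 1 ∨ jv = m + 2) with hc | hc | hc
      · rw [tupz_f K m (m + 1) (m + 2) m u u' u jv hj (by omega) (by omega),
            tupz_f K m (m + 1) (m + 2) m u u' u iv hi (by omega) (by omega),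
            dsA' K m iv (by omega), dsA' K m (jv - 1) (by omega),
            K.dd m iv jv hij (by omega)]
      · subst hc
        show K.d (m + 1) iv (tupz K m (m + 1) (m + 2) m u u' u ⟨m + 1, hj⟩) =
          K.d (m + 1) m (tupz K m (m + 1) (m + 2) m u u' u ⟨iv, hi⟩)
        rw [tupz_a K m (m + 1) (m + 2) m u u' u (m + 1) hj rfl,
            tupz_f K m (m + 1) (m + 2) m u u' u iv hi (by omega) (by omega),
            dsB' K m]
      · subst hc
        show K.d (m + 1) iv (tupz K m (m + 1) (m + 2) m u u' u ⟨m + 2, hj⟩) =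
          K.d (m + 1) (m + 1) (tupz K m (m + 1) (m + 2) m u u' u ⟨iv, hi⟩)
        rw [tupz_b K m (m + 1) (m + 2) m u u' u (m + 2) hj (by omega) rfl]
        rcases (by omega : iv ≤ m ∨ iv = m + 1) with hd | hd
        · rw [tupz_f K m (m + 1) (m + 2) m u u' u iv hi (by omega) (by omega),
              dsC' K m, hag iv (by omega) (by omega)]
        · subst hd
          rw [tupz_a K m (m + 1) (m + 2) m u u' u (m + 1) hi rfl,
              hag (m + 1) (by omega) (by omega)]
    obtain ⟨W, hW⟩ := hK (m + 2) (m + 3) (by omega) _ hcom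
    have hW' : ∀ (i : ℕ) (hi : i < m + 4), i ≠ m + 3 →
        K.d (m + 2) i W = tupz K m (m + 1) (m + 2) m u u' u ⟨i, hi⟩ :=
      fun i hi h => hW ⟨i, hi⟩ h
    refine ⟨K.d (m + 2) (m + 3) W, ?_⟩
    funext i
    obtain ⟨iv, hi⟩ := i
    show K.d (m + 1) iv (K.d (m + 2) (m + 2 + 1) W) =
      K.homotopyTuple (K.d (m + 1) (m + 2) u) (K.d (m + 1) (m + 2) u') ⟨iv, hi⟩
    rcases (by omega : iv ≤ m ∨ iv = m + 1 ∨ iv = m + 2) with hd | hd | hd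
    · rw [dd' K (m + 1) iv (m + 2) (by omega) (by omega) W,
          hW' iv (by omega) (by omega),
          tupz_f K m (m + 1) (m + 2) m u u' u iv (by omega) (by omega) (by omega),
          dsD' K m, htup_lt K m _ _ iv hi (by omega)]
      exact congrArg (K.s m m) (dd' K m iv (m + 1) (by omega) (by omega) u).symm
    · subst hd
      rw [dd' K (m + 1) (m + 1) (m + 2) (by omega) (by omega) W,
          hW' (m + 1) (by omega) (by omega),
          tupz_a K m (m + 1) (m + 2) m u u' u (m + 1) (by omega) rfl,
          htup_m1 K m _ _ (m + 1) hi rfl]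
    · subst hd
      rw [dd' K (m + 1) (m + 2) (m + 2) (by omega) (by omega) W,
          hW' (m + 2) (by omega) (by omega),
          tupz_b K m (m + 1) (m + 2) m u u' u (m + 2) (by omega) (by omega) rfl,
          htup_m2 K m _ _ (m + 2) hi rfl]

private lemma bwd (K : SSetC) (hK : K.IsKan) (m k : ℕ) (hk : k ≤ m + 2)
    (u : K.obj (m + 2)) (y' : K.obj (m + 1)) (h : K.obj (m + 2))
    (hh : K.bdry h = K.homotopyTuple (K.d (m + 1) k u) y') :
    ∃ u' : K.obj (m + 2),
      (∀ i : ℕ, i ≤ m + 2 → i ≠ k → K.d (m + 1) i u' = K.d (m + 1) i u) ∧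
        K.d (m + 1) k u' = y' := by
  have hhlt : ∀ i : ℕ, i ≤ m → K.d (m + 1) i h = K.s m m (K.d m i (K.d (m + 1) k u)) := by
    intro i hi
    have e := congrFun hh ⟨i, by omega⟩
    rw [htup_lt K m _ _ i (by omega) (by omega)] at e
    exact e
  have hhm1 : K.d (m + 1) (m + 1) h = K.d (m + 1) k u := by
    have e := congrFun hh ⟨m + 1, by omega⟩
    rw [htup_m1 K m _ _ (m + 1) (by omega) rfl] at e
    exact e
  have hhm2 : K.d (m + 1) (m + 2) h = y' := by
    have e := congrFun hh ⟨m + 2, by omega⟩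
    rw [htup_m2 K m _ _ (m + 2) (by omega) rfl] at e
    exact e
  rcases Nat.lt_or_ge k (m + 2) with hkA | hkB
  · -- Case A : k ≤ m + 1.  Horn tuple: h at k, u at m+2, s-degeneracies elsewhere, hole at m+3.
    have hcom : K.HornCompat (m + 3) (tupz K m k (m + 2) (m + 1) h u u) := by
      show ∀ i j : Fin (m + 4), (i : ℕ) ≠ m + 3 → (j : ℕ) ≠ m + 3 → (i : ℕ) < (j : ℕ) →
        K.d (m + 1) (i : ℕ) (tupz K m k (m + 2) (m + 1) h u u j) =
          K.d (m + 1) ((j : ℕ) - 1) (tupz K m k (m + 2) (m + 1) h u u i)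
      rintro ⟨iv, hi⟩ ⟨jv, hj⟩ him hjm hij
      replace him : iv ≠ m + 3 := him
      replace hjm : jv ≠ m + 3 := hjm
      replace hij : iv < jv := hij
      show K.d (m + 1) iv (tupz K m k (m + 2) (m + 1) h u u ⟨jv, hj⟩) =
        K.d (m + 1) (jv - 1) (tupz K m k (m + 2) (m + 1) h u u ⟨iv, hi⟩)
      rcases (by omega : jv = k ∨ jv = m + 2 ∨ (jv ≤ m + 1 ∧ jv ≠ k)) with hc | hc | hc
      · -- jv = k, iv < k
        subst hc
        rw [tupz_a K m jv (m + 2) (m + 1) h u u jv hj rfl,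
            tupz_f K m jv (m + 2) (m + 1) h u u iv hi (by omega) (by omega),
            hhlt iv (by omega), dsA K m (jv - 1) (by omega),
            ← K.dd m iv jv hij (by omega) u]
      · subst hc
        show K.d (m + 1) iv (tupz K m k (m + 2) (m + 1) h u u ⟨m + 2, hj⟩) =
          K.d (m + 1) (m + 1) (tupz K m k (m + 2) (m + 1) h u u ⟨iv, hi⟩)
        rw [tupz_b K m k (m + 2) (m + 1) h u u (m + 2) hj (by omega) rfl]
        rcases (by omega : iv = k ∨ (iv ≤ m + 1 ∧ iv ≠ k)) with hd | hd
        · subst hd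
          rw [tupz_a K m iv (m + 2) (m + 1) h u u iv hi rfl, hhm1]
        · rw [tupz_f K m k (m + 2) (m + 1) h u u iv hi hd.2 (by omega), dsB K m]
      · -- jv ≤ m + 1, jv ≠ k
        rw [tupz_f K m k (m + 2) (m + 1) h u u jv hj hc.2 (by omega)]
        rcases (by omega : iv = k ∨ (iv ≤ m + 1 ∧ iv ≠ k)) with hd | hd
        · subst hd
          rw [tupz_a K m iv (m + 2) (m + 1) h u u iv hi rfl,
              dsA K m iv (by omega), K.dd m iv jv hij (by omega),
              hhlt (jv - 1) (by omega)]
        · rw [tupz_f K m k (m + 2) (m + 1) h u u iv hi hd.2 (by omega),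
              dsA K m iv (by omega), dsA K m (jv - 1) (by omega),
              K.dd m iv jv hij (by omega)]
    obtain ⟨W, hW⟩ := hK (m + 2) (m + 3) (by omega) _ hcom
    have hW' : ∀ (i : ℕ) (hi : i < m + 4), i ≠ m + 3 →
        K.d (m + 2) i W = tupz K m k (m + 2) (m + 1) h u u ⟨i, hi⟩ :=
      fun i hi hne => hW ⟨i, hi⟩ hne
    refine ⟨K.d (m + 2) (m + 3) W, ?_, ?_⟩
    · intro i hi hikne
      show K.d (m + 1) i (K.d (m + 2) (m + 2 + 1) W) = K.d (m + 1) i u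
      rcases (by omega : i ≤ m + 1 ∨ i = m + 2) with hd | hd
      · rw [dd' K (m + 1) i (m + 2) (by omega) (by omega) W,
            hW' i (by omega) (by omega),
            tupz_f K m k (m + 2) (m + 1) h u u i (by omega) hikne (by omega),
            dsC K m]
      · subst hd
        rw [dd' K (m + 1) (m + 2) (m + 2) (by omega) (by omega) W,
            hW' (m + 2) (by omega) (by omega),
            tupz_b K m k (m + 2) (m + 1) h u u (m + 2) (by omega) (by omega) rfl]
    · show K.d (m + 1) k (K.d (m + 2) (m + 2 + 1) W) = y'
      rw [dd' K (m + 1) k (m + 2) (by omega) (by omega) W,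
          hW' k (by omega) (by omega),
          tupz_a K m k (m + 2) (m + 1) h u u k (by omega) rfl, hhm2]
  · -- Case B : k = m + 2.  Horn tuple: u at m+1, h at m+3, s-degeneracies, hole at m+2.
    have hkB' : k = m + 2 := by omega
    subst hkB'
    have hcom : K.HornCompat (m + 2) (tupz K m (m + 1) (m + 3) m u h u) := by
      show ∀ i j : Fin (m + 4), (i : ℕ) ≠ m + 2 → (j : ℕ) ≠ m + 2 → (i : ℕ) < (j : ℕ) →
        K.d (m + 1) (i : ℕ) (tupz K m (m + 1) (m + 3) m u h u j) =
          K.d (m + 1) ((j : ℕ) - 1) (tupz K m (m + 1) (m + 3) m u h u i)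
      rintro ⟨iv, hi⟩ ⟨jv, hj⟩ him hjm hij
      replace him : iv ≠ m + 2 := him
      replace hjm : jv ≠ m + 2 := hjm
      replace hij : iv < jv := hij
      show K.d (m + 1) iv (tupz K m (m + 1) (m + 3) m u h u ⟨jv, hj⟩) =
        K.d (m + 1) (jv - 1) (tupz K m (m + 1) (m + 3) m u h u ⟨iv, hi⟩)
      rcases (by omega : jv ≤ m ∨ jv = m + 1 ∨ jv = m + 3) with hc | hc | hc
      · rw [tupz_f K m (m + 1) (m + 3) m u h u jv hj (by omega) (by omega),
            tupz_f K m (m + 1) (m + 3) m u h u iv hi (by omega) (by omega),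
            dsA' K m iv (by omega), dsA' K m (jv - 1) (by omega),
            K.dd m iv jv hij (by omega)]
      · subst hc
        show K.d (m + 1) iv (tupz K m (m + 1) (m + 3) m u h u ⟨m + 1, hj⟩) =
          K.d (m + 1) m (tupz K m (m + 1) (m + 3) m u h u ⟨iv, hi⟩)
        rw [tupz_a K m (m + 1) (m + 3) m u h u (m + 1) hj rfl,
            tupz_f K m (m + 1) (m + 3) m u h u iv hi (by omega) (by omega),
            dsB' K m]
      · subst hc
        show K.d (m + 1) iv (tupz K m (m + 1) (m + 3) m u h u ⟨m + 3, hj⟩) =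
          K.d (m + 1) (m + 2) (tupz K m (m + 1) (m + 3) m u h u ⟨iv, hi⟩)
        rw [tupz_b K m (m + 1) (m + 3) m u h u (m + 3) hj (by omega) rfl]
        rcases (by omega : iv ≤ m ∨ iv = m + 1) with hd | hd
        · rw [tupz_f K m (m + 1) (m + 3) m u h u iv hi (by omega) (by omega),
              dsD' K m, hhlt iv (by omega)]
          exact congrArg (K.s m m) (dd' K m iv (m + 1) (by omega) (by omega) u)
        · subst hd
          rw [tupz_a K m (m + 1) (m + 3) m u h u (m + 1) hi rfl, hhm1]
    obtain ⟨W, hW⟩ := hK (m + 2) (m + 2) (by omega) _ hcom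
    have hW' : ∀ (i : ℕ) (hi : i < m + 4), i ≠ m + 2 →
        K.d (m + 2) i W = tupz K m (m + 1) (m + 3) m u h u ⟨i, hi⟩ :=
      fun i hi hne => hW ⟨i, hi⟩ hne
    refine ⟨K.d (m + 2) (m + 2) W, ?_, ?_⟩
    · intro i hi hikne
      rcases (by omega : i ≤ m ∨ i = m + 1) with hd | hd
      · show K.d (m + 1) i (K.d (m + 2) (m + 1 + 1) W) = K.d (m + 1) i u
        rw [dd' K (m + 1) i (m + 1) (by omega) (by omega) W,
            hW' i (by omega) (by omega),
            tupz_f K m (m + 1) (m + 3) m u h u i (by omega) (by omega) (by omega),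
            dsC' K m]
      · subst hd
        show K.d (m + 1) (m + 1) (K.d (m + 2) (m + 1 + 1) W) = K.d (m + 1) (m + 1) u
        rw [dd' K (m + 1) (m + 1) (m + 1) (by omega) (by omega) W,
            hW' (m + 1) (by omega) (by omega),
            tupz_a K m (m + 1) (m + 3) m u h u (m + 1) (by omega) rfl]
    · show K.d (m + 1) (m + 2) (K.d (m + 2) (m + 2) W) = y'
      rw [← dd' K (m + 1) (m + 2) (m + 2) (by omega) (by omega) W,
          hW' (m + 2 + 1) (by omega) (by omega),
          tupz_b K m (m + 1) (m + 3) m u h u (m + 2 + 1) (by omega) (by omega) (by omega),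
          hhm2]

end SSetCAux

open SSetC in
/-- **Key Lemma.** Let `c` be a boundary (of simplices of dimension
`m+1`) in a Kan complex `K`, let `y = c k` be its `k`-th entry, and let `y'` be a
simplex with `∂y' = ∂y`.  Then the cycle `c'` obtained from `c` by replacing the
`k`-th entry by `y'` is a boundary if and only if `y ∼ y'`. -/
theorem key_lemma (K : SSetC) (hK : K.IsKan) (m : ℕ)
    (c : Fin (m + 3) → K.obj (m + 1)) (hc : K.IsBoundary c)
    (k : Fin (m + 3)) (y' : K.obj (m + 1))
    (hby : K.bdry y' = K.bdry (c k)) :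
    K.IsBoundary (Function.update c k y') ↔ K.Homotopic (c k) y' := by
  obtain ⟨u, hu⟩ := hc
  have huvF : ∀ i : Fin (m + 3), K.d (m + 1) (i : ℕ) u = c i := fun i => congrFun hu i
  constructor
  · rintro ⟨u', hu'⟩
    have hag : ∀ i : ℕ, i ≤ m + 2 → i ≠ (k : ℕ) → K.d (m + 1) i u' = K.d (m + 1) i u := by
      intro i hi hik
      have e1 : K.d (m + 1) i u' = Function.update c k y' ⟨i, by omega⟩ :=
        congrFun hu' ⟨i, by omega⟩
      rw [Function.update_of_ne (fun hcon => hik (congrArg Fin.val hcon))] at e1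
      rw [e1]
      exact (huvF ⟨i, by omega⟩).symm
    have H := SSetCAux.fwd K hK m (k : ℕ) (Nat.lt_succ_iff.mp k.isLt) u u' hag
    have e1 : K.d (m + 1) (k : ℕ) u = c k := huvF k
    have e2 : K.d (m + 1) (k : ℕ) u' = y' := by
      have e := congrFun hu' k
      rwa [Function.update_self] at e
    rwa [e1, e2] at H
  · intro H
    rw [← huvF k] at H
    obtain ⟨h, hh⟩ := H
    obtain ⟨u', hag, hky⟩ :=
      SSetCAux.bwd K hK m (k : ℕ) (Nat.lt_succ_iff.mp k.isLt) u y' h hh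
    refine ⟨u', ?_⟩
    funext i
    by_cases hik : i = k
    · subst hik
      show K.d (m + 1) (i : ℕ) u' = Function.update c i y' i
      rw [Function.update_self]
      exact hky
    · show K.d (m + 1) (i : ℕ) u' = Function.update c k y' i
      rw [Function.update_of_ne hik,
          hag (i : ℕ) (Nat.lt_succ_iff.mp i.isLt) (fun hcon => hik (Fin.ext hcon))]
      exact huvF i
end

section
/- (Relative Key Lemma) Let (K,L) be a pair of Kan complexes with L a subcomplex of K. Let b = (l, x_1,…,x_n) be an (n-1)-boundary in K with l ∈ L_{n-1}, let 1 ≤ k ≤ n, and let x_k' ∈ K_{n-1} satisfy d_i x_k = d_i x_k' for 1 ≤ i ≤ n-1 and d_0 x_k, d_0 x_k' ∈ L_{n-2}. Then there exists l' ∈ L_{n-1} such that b' = (l', x_1,…,x_{k-1}, x_k', x_{k+1},…, x_n) is an (n-1)-boundary in K if and only if x_k is homotopic to x_k' relative L. -/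
namespace SSetC

variable (K : SSetC)

/-- A subcomplex of a simplicial set: a family of subsets closed under the
face and degeneracy operators. -/
structure Subcomplex (K : SSetC) where
  mem : ∀ n, Set (K.obj n)
  d_mem : ∀ (n i : ℕ), i ≤ n + 1 → ∀ x ∈ mem (n + 1), K.d n i x ∈ mem n
  s_mem : ∀ (n i : ℕ), i ≤ n → ∀ x ∈ mem n, K.s n i x ∈ mem (n + 1)

/-- The subcomplex `L` is itself a Kan complex: every horn with entries in `L`
has a filling lying in `L`. -/
def Subcomplex.IsKan {K : SSetC} (L : Subcomplex K) : Prop :=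
  ∀ (m k : ℕ), k ≤ m + 1 → ∀ c : Fin (m + 2) → K.obj m,
    (∀ i : Fin (m + 2), (i : ℕ) ≠ k → c i ∈ L.mem m) → K.HornCompat k c →
    ∃ x : K.obj (m + 1), x ∈ L.mem (m + 1) ∧ ∀ i : Fin (m + 2), (i : ℕ) ≠ k → K.d m i x = c i

/-- A tuple of `m`-simplices lying in a subcomplex is a boundary in the subcomplex
if it is the boundary of a simplex of the subcomplex. -/
def IsBoundaryIn (L : Subcomplex K) {m : ℕ} (c : Fin (m + 2) → K.obj m) : Prop :=
  ∃ x ∈ L.mem (m + 1), K.bdry x = c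

/-- Homotopy of simplices realized inside a subcomplex. -/
def HomotopicIn (L : Subcomplex K) {n : ℕ} (x y : K.obj n) : Prop :=
  K.IsBoundaryIn L (K.homotopyTuple x y)

/-- The cycle `(h_L, s_m d_1 x, …, s_m d_m x, x, y)` used to define relative homotopy. -/
def relTuple {m : ℕ} (hL x y : K.obj (m + 1)) : Fin (m + 3) → K.obj (m + 1) :=
  fun i =>
    if (i : ℕ) = 0 then hL
    else if (i : ℕ) < m + 1 then K.s m m (K.d m i x)
    else if (i : ℕ) = m + 1 then x
    else y

/-- Two `(m+1)`-simplices are homotopic relative to a subcomplex `L`. -/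
def HomotopicRel (L : Subcomplex K) {m : ℕ} (x y : K.obj (m + 1)) : Prop :=
  (∀ i : ℕ, 1 ≤ i → i ≤ m + 1 → K.d m i x = K.d m i y) ∧
  K.d m 0 x ∈ L.mem m ∧ K.d m 0 y ∈ L.mem m ∧
  ∃ hL ∈ L.mem (m + 1), K.IsBoundary (K.relTuple hL x y)

/-- Representatives of the relative homotopy group `π_{m+1}(K,L,⋆)`:
`∂x = (l, ⋆, …, ⋆)` with `l ∈ L`. -/
def IsRelSph (L : Subcomplex K) (b : K.obj 0) {m : ℕ} (x : K.obj (m + 1)) : Prop :=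
  K.d m 0 x ∈ L.mem m ∧ ∀ i : Fin (m + 2), 1 ≤ (i : ℕ) → K.d m i x = K.basept b m

def RelSph (L : Subcomplex K) (b : K.obj 0) (m : ℕ) := {x : K.obj (m + 1) // K.IsRelSph L b x}

/-- The relative homotopy group `π_{m+1}(K,L,⋆)` as a quotient set. -/
def piRel (L : Subcomplex K) (b : K.obj 0) (m : ℕ) :=
  Quot (fun x y : K.RelSph L b m => K.HomotopicRel L x.1 y.1)

def relCls (L : Subcomplex K) (b : K.obj 0) (m : ℕ) (x : K.RelSph L b m) : K.piRel L b m :=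
  Quot.mk _ x

/-- The cycle `(h, ⋆, …, ⋆, y, z, x)` (with `h ∈ L`) witnessing `[x][y] = [z]` in
the relative homotopy group `π_{m+2}(K,L,⋆)`. -/
def relMulTuple (b : K.obj 0) {m : ℕ} (h x y z : K.obj (m + 2)) : Fin (m + 4) → K.obj (m + 2) :=
  fun i =>
    if (i : ℕ) = 0 then h
    else if (i : ℕ) < m + 1 then K.basept b (m + 2)
    else if (i : ℕ) = m + 1 then y
    else if (i : ℕ) = m + 2 then z
    else x

def RelMulWitness (L : Subcomplex K) (b : K.obj 0) {m : ℕ} (x y z : K.obj (m + 2)) : Prop :=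
  ∃ h ∈ L.mem (m + 2), K.IsBoundary (K.relMulTuple b h x y z)

def RelMulDescends (L : Subcomplex K) (b : K.obj 0) (m : ℕ)
    (mul : K.piRel L b (m + 1) → K.piRel L b (m + 1) → K.piRel L b (m + 1)) : Prop :=
  ∀ x y z : K.RelSph L b (m + 1), K.RelMulWitness L b x.1 y.1 z.1 →
    mul (K.relCls L b (m + 1) x) (K.relCls L b (m + 1) y) = K.relCls L b (m + 1) z

/-- The subcomplex generated by a base point. -/
def ptSub (b : K.obj 0) : Subcomplex K where
  mem n := {x | x = K.basept b n}
  d_mem n i hi x hx := by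
    simp only [Set.mem_setOf_eq] at *
    rw [hx]; exact K.d_basept b n i hi
  s_mem n i hi x hx := by
    simp only [Set.mem_setOf_eq] at *
    rw [hx]; exact K.s_basept b n i hi

/-- The full subcomplex. -/
def topSub : Subcomplex K where
  mem _ := Set.univ
  d_mem _ _ _ _ _ := trivial
  s_mem _ _ _ _ _ := trivial

/-- The empty subcomplex. -/
def botSub : Subcomplex K where
  mem _ := ∅
  d_mem _ _ _ _ h := h.elim
  s_mem _ _ _ _ h := h.elim

/-- A simplicial map between simplicial sets. -/
structure SMap (K L : SSetC) where
  app : ∀ n, K.obj n → L.obj n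
  comm_d : ∀ (n i : ℕ), i ≤ n + 1 → ∀ x : K.obj (n + 1), app n (K.d n i x) = L.d n i (app (n + 1) x)
  comm_s : ∀ (n i : ℕ), i ≤ n → ∀ x : K.obj n, app (n + 1) (K.s n i x) = L.s n i (app n x)

/-- The identity simplicial map. -/
def SMap.idMap (K : SSetC) : SMap K K :=
  ⟨fun _ x => x, fun _ _ _ _ => rfl, fun _ _ _ _ => rfl⟩

/-- Composition of simplicial maps. -/
def SMap.comp {K L M : SSetC} (f : SMap K L) (g : SMap L M) : SMap K M where
  app n x := g.app n (f.app n x)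
  comm_d n i hi x := by rw [f.comm_d n i hi, g.comm_d n i hi]
  comm_s n i hi x := by rw [f.comm_s n i hi, g.comm_s n i hi]

lemma SMap.basept_app {K L : SSetC} (f : SMap K L) (b : K.obj 0) :
    ∀ n, f.app n (K.basept b n) = L.basept (f.app 0 b) n := by
  intro n
  induction n with
  | zero => rfl
  | succ n ih =>
    have h1 : K.basept b (n + 1) = K.s n 0 (K.basept b n) := rfl
    rw [h1, f.comm_s n 0 (Nat.zero_le _), ih]
    rfl

/-- The product of two simplicial sets. -/
def prodSSet (K L : SSetC) : SSetC where
  obj n := K.obj n × L.obj n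
  d n i x := (K.d n i x.1, L.d n i x.2)
  s n i x := (K.s n i x.1, L.s n i x.2)
  dd n i j h1 h2 x := Prod.ext (K.dd n i j h1 h2 x.1) (L.dd n i j h1 h2 x.2)
  ss n i j h1 h2 x := Prod.ext (K.ss n i j h1 h2 x.1) (L.ss n i j h1 h2 x.2)
  ds_lt n i j h1 h2 x := Prod.ext (K.ds_lt n i j h1 h2 x.1) (L.ds_lt n i j h1 h2 x.2)
  ds_self n i h x := Prod.ext (K.ds_self n i h x.1) (L.ds_self n i h x.2)
  ds_succ n i h x := Prod.ext (K.ds_succ n i h x.1) (L.ds_succ n i h x.2)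
  ds_gt n i j h1 h2 x := Prod.ext (K.ds_gt n i j h1 h2 x.1) (L.ds_gt n i j h1 h2 x.2)

/-- The product of a family of simplicial sets. -/
def piSSet {I : Type} (F : I → SSetC) : SSetC where
  obj n := ∀ i, (F i).obj n
  d n j x := fun i => (F i).d n j (x i)
  s n j x := fun i => (F i).s n j (x i)
  dd n i j h1 h2 x := funext fun a => (F a).dd n i j h1 h2 (x a)
  ss n i j h1 h2 x := funext fun a => (F a).ss n i j h1 h2 (x a)
  ds_lt n i j h1 h2 x := funext fun a => (F a).ds_lt n i j h1 h2 (x a)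
  ds_self n i h x := funext fun a => (F a).ds_self n i h (x a)
  ds_succ n i h x := funext fun a => (F a).ds_succ n i h (x a)
  ds_gt n i j h1 h2 x := funext fun a => (F a).ds_gt n i j h1 h2 (x a)

/-- The coproduct (disjoint union) of a family of simplicial sets. -/
def sigmaSSet {I : Type} (F : I → SSetC) : SSetC where
  obj n := Σ i, (F i).obj n
  d n j x := ⟨x.1, (F x.1).d n j x.2⟩
  s n j x := ⟨x.1, (F x.1).s n j x.2⟩
  dd n i j h1 h2 x := congrArg (Sigma.mk x.1) ((F x.1).dd n i j h1 h2 x.2)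
  ss n i j h1 h2 x := congrArg (Sigma.mk x.1) ((F x.1).ss n i j h1 h2 x.2)
  ds_lt n i j h1 h2 x := congrArg (Sigma.mk x.1) ((F x.1).ds_lt n i j h1 h2 x.2)
  ds_self n i h x := congrArg (Sigma.mk x.1) ((F x.1).ds_self n i h x.2)
  ds_succ n i h x := congrArg (Sigma.mk x.1) ((F x.1).ds_succ n i h x.2)
  ds_gt n i j h1 h2 x := congrArg (Sigma.mk x.1) ((F x.1).ds_gt n i j h1 h2 x.2)

/-- The one-point simplicial set. -/
def ptSSet : SSetC where
  obj _ := PUnit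
  d _ _ _ := PUnit.unit
  s _ _ _ := PUnit.unit
  dd _ _ _ _ _ _ := rfl
  ss _ _ _ _ _ _ := rfl
  ds_lt _ _ _ _ _ _ := rfl
  ds_self _ _ _ _ := rfl
  ds_succ _ _ _ _ := rfl
  ds_gt _ _ _ _ _ _ := rfl

/-- The standard `1`-simplex `Δ¹`: an `n`-simplex is a monotone map `[n] → [1]`,
encoded by the number `k ∈ {0, …, n+1}` of vertices sent to `0`. -/
def deltaOne : SSetC where
  obj n := Fin (n + 2)
  d n i k := ⟨if i < (k : ℕ) then (k : ℕ) - 1 else min (k : ℕ) (n + 1), by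
    have := k.isLt; split_ifs <;> omega⟩
  s n i k := ⟨if i < (k : ℕ) then (k : ℕ) + 1 else (k : ℕ), by
    have := k.isLt; split_ifs <;> omega⟩
  dd := by
    intro n i j h1 h2 x
    apply Fin.ext
    have := x.isLt
    simp only []
    split_ifs <;> omega
  ss := by
    intro n i j h1 h2 x
    apply Fin.ext
    have := x.isLt
    simp only []
    split_ifs <;> omega
  ds_lt := by
    intro n i j h1 h2 x
    apply Fin.ext
    have := x.isLt
    simp only []
    split_ifs <;> omega
  ds_self := by
    intro n i h x
    apply Fin.ext
    have := x.isLt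
    simp only []
    split_ifs <;> omega
  ds_succ := by
    intro n i h x
    apply Fin.ext
    have := x.isLt
    simp only []
    split_ifs <;> omega
  ds_gt := by
    intro n i j h1 h2 x
    apply Fin.ext
    have := x.isLt
    simp only []
    split_ifs <;> omega

/-- The `0`-end of `Δ¹` in dimension `n` (all vertices sent to `0`). -/
def vertexZero (n : ℕ) : Fin (n + 2) := ⟨n + 1, by omega⟩

/-- The `1`-end of `Δ¹` in dimension `n` (all vertices sent to `1`). -/
def vertexOne (n : ℕ) : Fin (n + 2) := ⟨0, by omega⟩

end SSetC

namespace SSetC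

/-- Two faces of a degeneracy, compared. -/
lemma dsPair (K : SSetC) {m : ℕ} (t a b : ℕ) (ha : a < t) (hb : b < t) (ht : t ≤ m + 1)
    (x y : K.obj (m + 1)) (hxy : K.d m a y = K.d m b x) :
    K.d (m + 1) a (K.s (m + 1) t y) = K.d (m + 1) b (K.s (m + 1) t x) := by
  rw [K.ds_lt m a t ha ht, K.ds_lt m b t hb ht, hxy]

lemma key_rev (K : SSetC) (hK : K.IsKan) (L : Subcomplex K) (hLK : L.IsKan)
    (m : ℕ) (cN : ℕ → K.obj (m + 1)) (kn : ℕ) (hk1 : 1 ≤ kn) (hk2 : kn ≤ m + 2)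
    (hcyc : ∀ i j : ℕ, i < j → j ≤ m + 2 → K.d m i (cN j) = K.d m (j - 1) (cN i))
    (w : K.obj (m + 2)) (hwf : ∀ j, j ≤ m + 2 → K.d (m + 1) j w = cN j)
    (hl : cN 0 ∈ L.mem (m + 1))
    (xk' : K.obj (m + 1))
    (hLs : K.obj (m + 1)) (hhLs : hLs ∈ L.mem (m + 1))
    (H : K.obj (m + 2))
    (hH0 : K.d (m + 1) 0 H = hLs)
    (hHd : ∀ i, 1 ≤ i → i ≤ m → K.d (m + 1) i H = K.s m m (K.d m i (cN kn)))
    (hHm1 : K.d (m + 1) (m + 1) H = cN kn)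
    (hHm2 : K.d (m + 1) (m + 2) H = xk') :
    ∃ l' ∈ L.mem (m + 1), ∃ w2 : K.obj (m + 2),
      K.d (m + 1) 0 w2 = l' ∧ K.d (m + 1) kn w2 = xk' ∧
      ∀ j, j ≤ m + 2 → j ≠ 0 → j ≠ kn → K.d (m + 1) j w2 = cN j := by
  have hLq : ∀ q, q ≤ m + 1 → K.d m q hLs = K.d m 0 (K.d (m + 1) (q + 1) H) := by
    intro q hq
    have h := K.dd m 0 (q + 1) (by omega) (by omega) H
    simp only [Nat.add_sub_cancel] at h
    rw [← hH0, ← h]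
  have dssA : ∀ x : K.obj (m + 1), K.d (m + 1) (m + 2) (K.s (m + 1) (m + 1) x) = x :=
    fun x => K.ds_succ (m + 1) (m + 1) le_rfl x
  have dseA : ∀ x : K.obj (m + 1), K.d (m + 1) (m + 1) (K.s (m + 1) (m + 1) x) = x :=
    fun x => K.ds_self (m + 1) (m + 1) le_rfl x
  rcases Nat.lt_or_ge kn (m + 2) with hA | hB
  · -- Case A : kn ≤ m + 1
    obtain ⟨V, hVL, hVf0⟩ := hLK (m + 1) (m + 2) (by omega)
      (fun i : Fin (m + 3) =>
        if (i : ℕ) = kn - 1 then hLs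
        else if (i : ℕ) ≤ m then K.s m m (K.d m i (cN 0)) else cN 0)
      (by
        intro i _
        split_ifs with h1 h2
        · exact hhLs
        · exact L.s_mem m m le_rfl _ (L.d_mem m i (by omega) _ hl)
        · exact hl)
      (by
        intro i j hik hjk hij
        obtain ⟨iv, hib⟩ := i
        obtain ⟨jv, hjb⟩ := j
        have hik' : iv ≠ m + 2 := hik
        have hjk' : jv ≠ m + 2 := hjk
        have hij' : iv < jv := hij
        show K.d m iv (if jv = kn - 1 then hLs
            else if jv ≤ m then K.s m m (K.d m jv (cN 0)) else cN 0)
          = K.d m (jv - 1) (if iv = kn - 1 then hLs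
            else if iv ≤ m then K.s m m (K.d m iv (cN 0)) else cN 0)
        by_cases hj1 : jv = kn - 1
        · rw [if_pos hj1, if_neg (by omega : ¬ iv = kn - 1), if_pos (by omega : iv ≤ m)]
          rw [hLq iv (by omega), hHd (iv + 1) (by omega) (by omega)]
          obtain ⟨m', rfl⟩ : ∃ m', m = m' + 1 := ⟨m - 1, by omega⟩
          refine K.dsPair (m' + 1) 0 (jv - 1) (by omega) (by omega) (by omega) _ _ ?_
          have e1 := K.dd m' 0 (iv + 1) (by omega) (by omega) (cN kn)
          simp only [Nat.add_sub_cancel] at e1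
          rw [e1, hcyc 0 kn (by omega) (by omega),
            K.dd m' iv (kn - 1) (by omega) (by omega) (cN 0),
            show kn - 1 - 1 = jv - 1 by omega]
        · rw [if_neg hj1]
          by_cases hj2 : jv ≤ m
          · rw [if_pos hj2]
            by_cases hi1 : iv = kn - 1
            · rw [if_pos hi1]
              rw [hLq (jv - 1) (by omega), show jv - 1 + 1 = jv by omega,
                hHd jv (by omega) (by omega)]
              obtain ⟨m', rfl⟩ : ∃ m', m = m' + 1 := ⟨m - 1, by omega⟩
              refine K.dsPair (m' + 1) iv 0 (by omega) (by omega) (by omega) _ _ ?_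
              rw [K.dd m' iv jv (by omega) (by omega) (cN 0),
                K.dd m' 0 jv (by omega) (by omega) (cN kn),
                hcyc 0 kn (by omega) (by omega), hi1]
            · rw [if_neg hi1, if_pos (by omega : iv ≤ m)]
              obtain ⟨m', rfl⟩ : ∃ m', m = m' + 1 := ⟨m - 1, by omega⟩
              exact K.dsPair (m' + 1) iv (jv - 1) (by omega) (by omega) (by omega) _ _
                (K.dd m' iv jv (by omega) (by omega) (cN 0))
          · -- jv = m + 1
            rw [if_neg hj2]
            by_cases hi1 : iv = kn - 1
            · rw [if_pos hi1, show jv - 1 = m by omega, hLq m (by omega), hHm1,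
                hcyc 0 kn (by omega) (by omega), hi1]
            · rw [if_neg hi1, if_pos (by omega : iv ≤ m), show jv - 1 = m by omega,
                K.ds_self m m le_rfl]) 
    have hVd : ∀ q, q ≤ m + 1 → K.d (m + 1) q V =
        (if q = kn - 1 then hLs else if q ≤ m then K.s m m (K.d m q (cN 0)) else cN 0) :=
      fun q hq => hVf0 ⟨q, by omega⟩ (show q ≠ m + 2 by omega)
    have hVhL : K.d (m + 1) (kn - 1) V = hLs := by
      have h := hVd (kn - 1) (by omega); rwa [if_pos rfl] at h
    have hVs : ∀ q, q ≤ m → q ≠ kn - 1 → K.d (m + 1) q V = K.s m m (K.d m q (cN 0)) := by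
      intro q h1 h2
      have h := hVd q (by omega); rwa [if_neg h2, if_pos h1] at h
    have hVtop : K.d (m + 1) (m + 1) V = cN 0 := by
      have h := hVd (m + 1) (by omega)
      rwa [if_neg (by omega), if_neg (by omega)] at h
    obtain ⟨U, hUf0⟩ := hK (m + 2) (m + 3) (by omega)
      (fun i : Fin (m + 4) =>
        if (i : ℕ) = 0 then V
        else if (i : ℕ) = kn then H
        else if (i : ℕ) ≤ m + 1 then K.s (m + 1) (m + 1) (cN i) else w)
      (by
        intro i j hik hjk hij
        obtain ⟨iv, hib⟩ := i
        obtain ⟨jv, hjb⟩ := j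
        have hik' : iv ≠ m + 3 := hik
        have hjk' : jv ≠ m + 3 := hjk
        have hij' : iv < jv := hij
        show K.d (m + 1) iv (if jv = 0 then V else if jv = kn then H
            else if jv ≤ m + 1 then K.s (m + 1) (m + 1) (cN jv) else w)
          = K.d (m + 1) (jv - 1) (if iv = 0 then V else if iv = kn then H
            else if iv ≤ m + 1 then K.s (m + 1) (m + 1) (cN iv) else w)
        rw [if_neg (by omega : ¬ jv = 0)]
        by_cases hi0 : iv = 0
        · rw [if_pos hi0, hi0]
          by_cases hjkn : jv = kn
          · rw [if_pos hjkn, hH0, show jv - 1 = kn - 1 by omega, hVhL]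
          · rw [if_neg hjkn]
            by_cases hjm : jv ≤ m + 1
            · rw [if_pos hjm]
              have e := K.ds_lt m 0 (m + 1) (by omega) (by omega) (cN jv)
              simp only [Nat.add_sub_cancel] at e
              rw [e, hcyc 0 jv (by omega) (by omega), hVs (jv - 1) (by omega) (by omega)]
            · rw [if_neg hjm, hwf 0 (by omega), show jv - 1 = m + 1 by omega, hVtop]
        · rw [if_neg hi0]
          by_cases hikn : iv = kn
          · rw [if_pos hikn]
            by_cases hjkn : jv = kn
            · omega
            · rw [if_neg hjkn]
              by_cases hjm : jv ≤ m + 1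
              · rw [if_pos hjm, hHd (jv - 1) (by omega) (by omega), ← hikn]
                have e := K.ds_lt m iv (m + 1) (by omega) (by omega) (cN jv)
                simp only [Nat.add_sub_cancel] at e
                rw [e, hcyc iv jv (by omega) (by omega), hikn]
              · rw [if_neg hjm, hwf iv (by omega), hikn, show jv - 1 = m + 1 by omega, hHm1]
          · rw [if_neg hikn, if_pos (by omega : iv ≤ m + 1)]
            by_cases hjkn : jv = kn
            · rw [if_pos hjkn, hHd iv (by omega) (by omega)]
              have e := K.ds_lt m (jv - 1) (m + 1) (by omega) (by omega) (cN iv)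
              simp only [Nat.add_sub_cancel] at e
              rw [e, hcyc iv kn (by omega) (by omega), show kn - 1 = jv - 1 by omega]
            · rw [if_neg hjkn]
              by_cases hjm : jv ≤ m + 1
              · rw [if_pos hjm]
                exact K.dsPair (m + 1) iv (jv - 1) (by omega) (by omega) (by omega) _ _
                  (hcyc iv jv (by omega) (by omega))
              · rw [if_neg hjm, hwf iv (by omega), show jv - 1 = m + 1 by omega, dseA]) 
    have hUd : ∀ q, q ≤ m + 2 → K.d (m + 2) q U =
        (if q = 0 then V else if q = kn then H
          else if q ≤ m + 1 then K.s (m + 1) (m + 1) (cN q) else w) :=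
      fun q hq => hUf0 ⟨q, by omega⟩ (show q ≠ m + 3 by omega)
    have hWd : ∀ q, q ≤ m + 2 → K.d (m + 1) q (K.d (m + 2) (m + 3) U)
        = K.d (m + 1) (m + 2) (K.d (m + 2) q U) := by
      intro q hq
      have h := K.dd (m + 1) q (m + 3) (by omega) (by omega) U
      rwa [show m + 3 - 1 = m + 2 by omega] at h
    refine ⟨K.d (m + 1) (m + 2) V, L.d_mem (m + 1) (m + 2) (by omega) V hVL,
      K.d (m + 2) (m + 3) U, ?_, ?_, ?_⟩
    · rw [hWd 0 (by omega), hUd 0 (by omega), if_pos rfl]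
    · rw [hWd kn (by omega), hUd kn (by omega), if_neg (by omega), if_pos rfl, hHm2]
    · intro j hj hj0 hjkn
      rw [hWd j hj, hUd j hj, if_neg hj0, if_neg hjkn]
      by_cases hjm : j ≤ m + 1
      · rw [if_pos hjm, dssA]
      · rw [if_neg hjm, show j = m + 2 by omega, hwf (m + 2) (by omega)]
  · -- Case B : kn = m + 2
    have hkB : kn = m + 2 := by omega
    subst hkB
    -- V-horn in L, hole m+1
    obtain ⟨V, hVL, hVf0⟩ := hLK (m + 1) (m + 1) (by omega)
      (fun i : Fin (m + 3) =>
        if (i : ℕ) + 1 ≤ m then K.s m (m - 1) (K.d m i (cN 0))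
        else if (i : ℕ) = m then cN 0 else hLs)
      (by
        intro i _
        split_ifs with h1 h2
        · exact L.s_mem m (m - 1) (by omega) _ (L.d_mem m i (by omega) _ hl)
        · exact hl
        · exact hhLs)
      (by
        intro i j hik hjk hij
        obtain ⟨iv, hib⟩ := i
        obtain ⟨jv, hjb⟩ := j
        have hik' : iv ≠ m + 1 := hik
        have hjk' : jv ≠ m + 1 := hjk
        have hij' : iv < jv := hij
        show K.d m iv (if jv + 1 ≤ m then K.s m (m - 1) (K.d m jv (cN 0))
            else if jv = m then cN 0 else hLs)
          = K.d m (jv - 1) (if iv + 1 ≤ m then K.s m (m - 1) (K.d m iv (cN 0))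
            else if iv = m then cN 0 else hLs)
        by_cases hj1 : jv + 1 ≤ m
        · rw [if_pos hj1, if_pos (by omega : iv + 1 ≤ m)]
          obtain ⟨m', rfl⟩ : ∃ m', m = m' + 1 := ⟨m - 1, by omega⟩
          rw [show m' + 1 - 1 = m' by omega]
          exact K.dsPair m' iv (jv - 1) (by omega) (by omega) (by omega) _ _
            (K.dd m' iv jv (by omega) (by omega) (cN 0))
        · rw [if_neg hj1]
          by_cases hj2 : jv = m
          · rw [if_pos hj2, if_pos (by omega : iv + 1 ≤ m), show jv - 1 = m - 1 by omega,
              K.ds_self m (m - 1) (by omega)]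
          · -- jv = m + 2
            have hj3 : jv = m + 2 := by omega
            rw [if_neg hj2]
            by_cases hi1 : iv + 1 ≤ m
            · rw [if_pos hi1, hLq iv (by omega), hHd (iv + 1) (by omega) (by omega),
                show jv - 1 = m + 1 by omega]
              obtain ⟨m', rfl⟩ : ∃ m', m = m' + 1 := ⟨m - 1, by omega⟩
              rw [show m' + 1 - 1 = m' by omega, show m' + 1 + 1 = m' + 2 by omega]
              have egt := K.ds_gt m' (m' + 2) m' (by omega) (by omega)
                (K.d (m' + 1) iv (cN 0))
              rw [show m' + 2 - 1 = m' + 1 by omega] at egt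
              rw [egt]
              have e1 := K.ds_lt m' 0 (m' + 1) (by omega) (by omega)
                (K.d (m' + 1) (iv + 1) (cN (m' + 1 + 2)))
              rw [show m' + 1 - 1 = m' by omega] at e1
              rw [e1]
              have e2 := K.dd m' 0 (iv + 1) (by omega) (by omega) (cN (m' + 1 + 2))
              simp only [Nat.add_sub_cancel] at e2
              rw [e2, hcyc 0 (m' + 1 + 2) (by omega) (by omega),
                show m' + 1 + 2 - 1 = m' + 2 by omega,
                K.dd m' iv (m' + 2) (by omega) (by omega) (cN 0),
                show m' + 2 - 1 = m' + 1 by omega]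
            · have hi2 : iv = m := by omega
              rw [if_neg (by omega : ¬ iv + 1 ≤ m), if_pos hi2, hi2, hLq m (by omega), hHm1,
                hcyc 0 (m + 2) (by omega) (by omega), show m + 2 - 1 = m + 1 by omega,
                show jv - 1 = m + 1 by omega])
    have hVd : ∀ q, q ≤ m + 2 → q ≠ m + 1 → K.d (m + 1) q V =
        (if q + 1 ≤ m then K.s m (m - 1) (K.d m q (cN 0))
          else if q = m then cN 0 else hLs) :=
      fun q hq hq1 => hVf0 ⟨q, by omega⟩ (show q ≠ m + 1 from hq1)
    -- U-horn in K, hole m+2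
    obtain ⟨U, hUf0⟩ := hK (m + 2) (m + 2) (by omega)
      (fun i : Fin (m + 4) =>
        if (i : ℕ) = 0 then V
        else if (i : ℕ) ≤ m then K.s (m + 1) m (cN i)
        else if (i : ℕ) = m + 1 then w else H)
      (by
        intro i j hik hjk hij
        obtain ⟨iv, hib⟩ := i
        obtain ⟨jv, hjb⟩ := j
        have hik' : iv ≠ m + 2 := hik
        have hjk' : jv ≠ m + 2 := hjk
        have hij' : iv < jv := hij
        show K.d (m + 1) iv (if jv = 0 then V else if jv ≤ m then K.s (m + 1) m (cN jv)
            else if jv = m + 1 then w else H)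
          = K.d (m + 1) (jv - 1) (if iv = 0 then V else if iv ≤ m then K.s (m + 1) m (cN iv)
            else if iv = m + 1 then w else H)
        rw [if_neg (by omega : ¬ jv = 0)]
        by_cases hi0 : iv = 0
        · rw [if_pos hi0, hi0]
          by_cases hjm : jv ≤ m
          · rw [if_pos hjm, K.ds_lt m 0 m (by omega) (by omega) (cN jv),
              hcyc 0 jv (by omega) (by omega),
              hVd (jv - 1) (by omega) (by omega), if_pos (by omega : jv - 1 + 1 ≤ m)]
          · rw [if_neg hjm]
            by_cases hjm1 : jv = m + 1
            · rw [if_pos hjm1, hwf 0 (by omega), hVd (jv - 1) (by omega) (by omega),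
                if_neg (by omega), if_pos (by omega : jv - 1 = m)]
            · -- jv = m + 3
              rw [if_neg hjm1, hH0, show jv - 1 = m + 2 by omega,
                hVd (m + 2) (by omega) (by omega), if_neg (by omega), if_neg (by omega)]
        · rw [if_neg hi0]
          by_cases him : iv ≤ m
          · rw [if_pos him]
            by_cases hjm : jv ≤ m
            · rw [if_pos hjm]
              exact K.dsPair m iv (jv - 1) (by omega) (by omega) (by omega) _ _
                (hcyc iv jv (by omega) (by omega))
            · rw [if_neg hjm]
              by_cases hjm1 : jv = m + 1
              · rw [if_pos hjm1, hwf iv (by omega), show jv - 1 = m by omega,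
                  K.ds_self (m + 1) m (by omega)]
              · -- jv = m + 3
                rw [if_neg hjm1, hHd iv (by omega) (by omega), show jv - 1 = m + 2 by omega]
                have egt := K.ds_gt m (m + 2) m (by omega) (by omega) (cN iv)
                rw [show m + 2 - 1 = m + 1 by omega] at egt
                rw [egt, hcyc iv (m + 2) (by omega) (by omega),
                  show m + 2 - 1 = m + 1 by omega]
          · -- iv = m + 1, jv = m + 3
            have hi2 : iv = m + 1 := by omega
            rw [if_neg him, if_pos hi2, if_neg (by omega : ¬ jv ≤ m),
              if_neg (by omega : ¬ jv = m + 1), hi2, hHm1,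
              show jv - 1 = m + 2 by omega, hwf (m + 2) (by omega)])
    have hUd : ∀ q, q ≤ m + 3 → q ≠ m + 2 → K.d (m + 2) q U =
        (if q = 0 then V else if q ≤ m then K.s (m + 1) m (cN q)
          else if q = m + 1 then w else H) :=
      fun q hq hq2 => hUf0 ⟨q, by omega⟩ (show q ≠ m + 2 from hq2)
    have hWd : ∀ q, q ≤ m + 1 → K.d (m + 1) q (K.d (m + 2) (m + 2) U)
        = K.d (m + 1) (m + 1) (K.d (m + 2) q U) := by
      intro q hq
      have h := K.dd (m + 1) q (m + 2) (by omega) (by omega) U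
      rwa [show m + 2 - 1 = m + 1 by omega] at h
    have dssB : ∀ x : K.obj (m + 1), K.d (m + 1) (m + 1) (K.s (m + 1) m x) = x :=
      fun x => K.ds_succ (m + 1) m (by omega) x
    refine ⟨K.d (m + 1) (m + 1) V, L.d_mem (m + 1) (m + 1) (by omega) V hVL,
      K.d (m + 2) (m + 2) U, ?_, ?_, ?_⟩
    · rw [hWd 0 (by omega), hUd 0 (by omega) (by omega), if_pos rfl]
    · -- face m+2 of w'' is xk'
      have h := K.dd (m + 1) (m + 2) (m + 3) (by omega) (by omega) U
      rw [show m + 3 - 1 = m + 2 by omega] at h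
      rw [← h, hUd (m + 3) (by omega) (by omega), if_neg (by omega), if_neg (by omega),
        if_neg (by omega), hHm2]
    · intro j hj hj0 hjkn
      rw [hWd j (by omega), hUd j (by omega) (by omega), if_neg hj0]
      by_cases hjm : j ≤ m
      · rw [if_pos hjm, dssB]
      · rw [if_neg hjm, if_pos (by omega : j = m + 1), hwf (m + 1) (by omega),
          show j = m + 1 by omega]

lemma key_fwd (K : SSetC) (hK : K.IsKan) (L : Subcomplex K) (hLK : L.IsKan)
    (m : ℕ) (cN : ℕ → K.obj (m + 1)) (kn : ℕ) (hk1 : 1 ≤ kn) (hk2 : kn ≤ m + 2)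
    (hcyc : ∀ i j : ℕ, i < j → j ≤ m + 2 → K.d m i (cN j) = K.d m (j - 1) (cN i))
    (w : K.obj (m + 2)) (hwf : ∀ j, j ≤ m + 2 → K.d (m + 1) j w = cN j)
    (hl : cN 0 ∈ L.mem (m + 1))
    (xk' : K.obj (m + 1))
    (l' : K.obj (m + 1)) (hl' : l' ∈ L.mem (m + 1))
    (w2 : K.obj (m + 2))
    (hw20 : K.d (m + 1) 0 w2 = l')
    (hw2k : K.d (m + 1) kn w2 = xk')
    (hw2 : ∀ j, j ≤ m + 2 → j ≠ 0 → j ≠ kn → K.d (m + 1) j w2 = cN j) :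
    ∃ hLs ∈ L.mem (m + 1), ∃ H : K.obj (m + 2),
      K.d (m + 1) 0 H = hLs ∧
      (∀ i, 1 ≤ i → i ≤ m → K.d (m + 1) i H = K.s m m (K.d m i (cN kn))) ∧
      K.d (m + 1) (m + 1) H = cN kn ∧ K.d (m + 1) (m + 2) H = xk' := by
  -- faces of l'
  have hl'q : ∀ q, q ≤ m + 1 → K.d m q l' = K.d m 0 (K.d (m + 1) (q + 1) w2) := by
    intro q hq
    have h := K.dd m 0 (q + 1) (by omega) (by omega) w2
    simp only [Nat.add_sub_cancel] at h
    rw [← hw20, ← h]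
  have hl'f : ∀ q, q ≤ m + 1 → q + 1 ≠ kn → K.d m q l' = K.d m q (cN 0) := by
    intro q hq hqk
    have h2 := hcyc 0 (q + 1) (by omega) (by omega)
    simp only [Nat.add_sub_cancel] at h2
    rw [hl'q q hq, hw2 (q + 1) (by omega) (by omega) hqk, h2]
  have dssA : ∀ x : K.obj (m + 1), K.d (m + 1) (m + 2) (K.s (m + 1) (m + 1) x) = x :=
    fun x => K.ds_succ (m + 1) (m + 1) le_rfl x
  have dseA : ∀ x : K.obj (m + 1), K.d (m + 1) (m + 1) (K.s (m + 1) (m + 1) x) = x :=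
    fun x => K.ds_self (m + 1) (m + 1) le_rfl x
  rcases Nat.lt_or_ge kn (m + 2) with hA | hB
  · -- Case A : kn ≤ m + 1 ; L-horn with hole kn - 1
    obtain ⟨V, hVL, hVf0⟩ := hLK (m + 1) (kn - 1) (by omega)
      (fun i : Fin (m + 3) =>
        if (i : ℕ) ≤ m then K.s m m (K.d m i (cN 0))
        else if (i : ℕ) = m + 1 then cN 0 else l')
      (by
        intro i _
        split_ifs with h1 h2
        · exact L.s_mem m m le_rfl _ (L.d_mem m i (by omega) _ hl)
        · exact hl
        · exact hl')
      (by
        intro i j hik hjk hij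
        obtain ⟨iv, hib⟩ := i
        obtain ⟨jv, hjb⟩ := j
        have hik' : iv ≠ kn - 1 := hik
        have hjk' : jv ≠ kn - 1 := hjk
        have hij' : iv < jv := hij
        show K.d m iv (if jv ≤ m then K.s m m (K.d m jv (cN 0))
            else if jv = m + 1 then cN 0 else l')
          = K.d m (jv - 1) (if iv ≤ m then K.s m m (K.d m iv (cN 0))
            else if iv = m + 1 then cN 0 else l')
        by_cases hj1 : jv ≤ m
        · rw [if_pos hj1, if_pos (by omega : iv ≤ m)]
          obtain ⟨m', rfl⟩ : ∃ m', m = m' + 1 := ⟨m - 1, by omega⟩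
          exact K.dsPair (m' + 1) iv (jv - 1) (by omega) (by omega) (by omega) _ _
            (K.dd m' iv jv (by omega) (by omega) (cN 0))
        · rw [if_neg hj1]
          by_cases hj2 : jv = m + 1
          · rw [if_pos hj2, if_pos (by omega : iv ≤ m), show jv - 1 = m by omega,
              K.ds_self m m le_rfl]
          · -- jv = m + 2
            rw [if_neg hj2]
            by_cases hi1 : iv ≤ m
            · rw [if_pos hi1, hl'f iv (by omega) (by omega), show jv - 1 = m + 1 by omega,
                K.ds_succ m m le_rfl]
            · have hi2 : iv = m + 1 := by omega
              rw [if_neg hi1, if_pos hi2, hi2, hl'f (m + 1) (by omega) (by omega),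
                show jv - 1 = m + 1 by omega]) 
    have hVd : ∀ q, q ≤ m + 2 → q ≠ kn - 1 → K.d (m + 1) q V =
        (if q ≤ m then K.s m m (K.d m q (cN 0))
          else if q = m + 1 then cN 0 else l') :=
      fun q hq hq1 => hVf0 ⟨q, by omega⟩ (show q ≠ kn - 1 from hq1)
    -- U-horn in K with hole kn
    obtain ⟨U, hUf0⟩ := hK (m + 2) kn (by omega)
      (fun i : Fin (m + 4) =>
        if (i : ℕ) = 0 then V
        else if (i : ℕ) ≤ m + 1 then K.s (m + 1) (m + 1) (cN i)
        else if (i : ℕ) = m + 2 then w else w2)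
      (by
        intro i j hik hjk hij
        obtain ⟨iv, hib⟩ := i
        obtain ⟨jv, hjb⟩ := j
        have hik' : iv ≠ kn := hik
        have hjk' : jv ≠ kn := hjk
        have hij' : iv < jv := hij
        show K.d (m + 1) iv (if jv = 0 then V else if jv ≤ m + 1 then K.s (m + 1) (m + 1) (cN jv)
            else if jv = m + 2 then w else w2)
          = K.d (m + 1) (jv - 1) (if iv = 0 then V else if iv ≤ m + 1 then K.s (m + 1) (m + 1) (cN iv)
            else if iv = m + 2 then w else w2)
        rw [if_neg (by omega : ¬ jv = 0)]
        by_cases hi0 : iv = 0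
        · rw [if_pos hi0, hi0]
          by_cases hjm : jv ≤ m + 1
          · rw [if_pos hjm]
            have e := K.ds_lt m 0 (m + 1) (by omega) (by omega) (cN jv)
            simp only [Nat.add_sub_cancel] at e
            rw [e, hcyc 0 jv (by omega) (by omega), hVd (jv - 1) (by omega) (by omega),
              if_pos (by omega : jv - 1 ≤ m)]
          · rw [if_neg hjm]
            by_cases hjm2 : jv = m + 2
            · rw [if_pos hjm2, hwf 0 (by omega), hVd (jv - 1) (by omega) (by omega),
                if_neg (by omega), if_pos (by omega : jv - 1 = m + 1)]
            · -- jv = m + 3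
              rw [if_neg hjm2, hw20, show jv - 1 = m + 2 by omega,
                hVd (m + 2) (by omega) (by omega), if_neg (by omega), if_neg (by omega)]
        · rw [if_neg hi0]
          by_cases him : iv ≤ m + 1
          · rw [if_pos him]
            by_cases hjm : jv ≤ m + 1
            · rw [if_pos hjm]
              exact K.dsPair (m + 1) iv (jv - 1) (by omega) (by omega) (by omega) _ _
                (hcyc iv jv (by omega) (by omega))
            · rw [if_neg hjm]
              by_cases hjm2 : jv = m + 2
              · rw [if_pos hjm2, hwf iv (by omega), show jv - 1 = m + 1 by omega, dseA]
              · -- jv = m + 3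
                rw [if_neg hjm2, hw2 iv (by omega) (by omega) (by omega),
                  show jv - 1 = m + 2 by omega, dssA]
          · -- iv = m + 2, jv = m + 3
            have hi2 : iv = m + 2 := by omega
            rw [if_neg him, if_pos hi2, if_neg (by omega : ¬ jv ≤ m + 1),
              if_neg (by omega : ¬ jv = m + 2), hi2,
              hw2 (m + 2) (by omega) (by omega) (by omega),
              show jv - 1 = m + 2 by omega, hwf (m + 2) (by omega)])
    have hUd : ∀ q, q ≤ m + 3 → q ≠ kn → K.d (m + 2) q U =
        (if q = 0 then V else if q ≤ m + 1 then K.s (m + 1) (m + 1) (cN q)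
          else if q = m + 2 then w else w2) :=
      fun q hq hq1 => hUf0 ⟨q, by omega⟩ (show q ≠ kn from hq1)
    -- H := d_kn U
    have hdlo : ∀ q, q < kn → K.d (m + 1) q (K.d (m + 2) kn U)
        = K.d (m + 1) (kn - 1) (K.d (m + 2) q U) := by
      intro q hq
      exact K.dd (m + 1) q kn hq (by omega) U
    have hdhi : ∀ q, kn ≤ q → q ≤ m + 2 → K.d (m + 1) q (K.d (m + 2) kn U)
        = K.d (m + 1) kn (K.d (m + 2) (q + 1) U) := by
      intro q hq1 hq2
      have h := K.dd (m + 1) kn (q + 1) (by omega) (by omega) U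
      simp only [Nat.add_sub_cancel] at h
      rw [h]
    refine ⟨K.d (m + 1) (kn - 1) V, L.d_mem (m + 1) (kn - 1) (by omega) V hVL,
      K.d (m + 2) kn U, ?_, ?_, ?_, ?_⟩
    · rw [hdlo 0 (by omega), hUd 0 (by omega) (by omega), if_pos rfl]
    · intro q hq1 hq2
      rcases Nat.lt_or_ge q kn with hqk | hqk
      · rw [hdlo q hqk, hUd q (by omega) (by omega), if_neg (by omega),
          if_pos (by omega : q ≤ m + 1)]
        have e := K.ds_lt m (kn - 1) (m + 1) (by omega) (by omega) (cN q)
        simp only [Nat.add_sub_cancel] at e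
        rw [e, ← hcyc q kn (by omega) (by omega)]
      · rw [hdhi q hqk (by omega), hUd (q + 1) (by omega) (by omega), if_neg (by omega),
          if_pos (by omega : q + 1 ≤ m + 1)]
        have e := K.ds_lt m kn (m + 1) (by omega) (by omega) (cN (q + 1))
        simp only [Nat.add_sub_cancel] at e
        have h2 := hcyc kn (q + 1) (by omega) (by omega)
        simp only [Nat.add_sub_cancel] at h2
        rw [e, h2]
    · rw [hdhi (m + 1) (by omega) (by omega), hUd (m + 2) (by omega) (by omega),
        if_neg (by omega), if_neg (by omega), if_pos rfl, hwf kn (by omega)]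
    · rw [hdhi (m + 2) (by omega) (by omega), hUd (m + 3) (by omega) (by omega),
        if_neg (by omega), if_neg (by omega), if_neg (by omega), hw2k]
  · -- Case B : kn = m + 2
    have hkB : kn = m + 2 := by omega
    subst hkB
    -- L-horn with hole m + 2
    obtain ⟨V, hVL, hVf0⟩ := hLK (m + 1) (m + 2) (by omega)
      (fun i : Fin (m + 3) =>
        if (i : ℕ) + 1 ≤ m then K.s m (m - 1) (K.d m i (cN 0))
        else if (i : ℕ) = m then cN 0 else l')
      (by
        intro i _
        split_ifs with h1 h2
        · exact L.s_mem m (m - 1) (by omega) _ (L.d_mem m i (by omega) _ hl)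
        · exact hl
        · exact hl')
      (by
        intro i j hik hjk hij
        obtain ⟨iv, hib⟩ := i
        obtain ⟨jv, hjb⟩ := j
        have hik' : iv ≠ m + 2 := hik
        have hjk' : jv ≠ m + 2 := hjk
        have hij' : iv < jv := hij
        show K.d m iv (if jv + 1 ≤ m then K.s m (m - 1) (K.d m jv (cN 0))
            else if jv = m then cN 0 else l')
          = K.d m (jv - 1) (if iv + 1 ≤ m then K.s m (m - 1) (K.d m iv (cN 0))
            else if iv = m then cN 0 else l')
        by_cases hj1 : jv + 1 ≤ m
        · rw [if_pos hj1, if_pos (by omega : iv + 1 ≤ m)]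
          obtain ⟨m', rfl⟩ : ∃ m', m = m' + 1 := ⟨m - 1, by omega⟩
          rw [show m' + 1 - 1 = m' by omega]
          exact K.dsPair m' iv (jv - 1) (by omega) (by omega) (by omega) _ _
            (K.dd m' iv jv (by omega) (by omega) (cN 0))
        · rw [if_neg hj1]
          by_cases hj2 : jv = m
          · rw [if_pos hj2, if_pos (by omega : iv + 1 ≤ m), show jv - 1 = m - 1 by omega,
              K.ds_self m (m - 1) (by omega)]
          · -- jv = m + 1 : entry l'
            have hj3 : jv = m + 1 := by omega
            rw [if_neg hj2]
            by_cases hi1 : iv + 1 ≤ m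
            · rw [if_pos hi1, hl'f iv (by omega) (by omega), show jv - 1 = m by omega]
              have e := K.ds_succ m (m - 1) (by omega) (K.d m iv (cN 0))
              rw [show m - 1 + 1 = m by omega] at e
              rw [e]
            · have hi2 : iv = m := by omega
              rw [if_neg (by omega : ¬ iv + 1 ≤ m), if_pos hi2, hi2,
                hl'q m (by omega), hw2 (m + 1) (by omega) (by omega) (by omega),
                hcyc 0 (m + 1) (by omega) (by omega), show m + 1 - 1 = m by omega,
                show jv - 1 = m by omega])
    have hVd : ∀ q, q ≤ m + 1 → K.d (m + 1) q V =
        (if q + 1 ≤ m then K.s m (m - 1) (K.d m q (cN 0))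
          else if q = m then cN 0 else l') :=
      fun q hq => hVf0 ⟨q, by omega⟩ (show q ≠ m + 2 by omega)
    -- U-horn in K, hole m + 3
    obtain ⟨U, hUf0⟩ := hK (m + 2) (m + 3) (by omega)
      (fun i : Fin (m + 4) =>
        if (i : ℕ) = 0 then V
        else if (i : ℕ) ≤ m then K.s (m + 1) m (cN i)
        else if (i : ℕ) = m + 1 then w else w2)
      (by
        intro i j hik hjk hij
        obtain ⟨iv, hib⟩ := i
        obtain ⟨jv, hjb⟩ := j
        have hik' : iv ≠ m + 3 := hik
        have hjk' : jv ≠ m + 3 := hjk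
        have hij' : iv < jv := hij
        show K.d (m + 1) iv (if jv = 0 then V else if jv ≤ m then K.s (m + 1) m (cN jv)
            else if jv = m + 1 then w else w2)
          = K.d (m + 1) (jv - 1) (if iv = 0 then V else if iv ≤ m then K.s (m + 1) m (cN iv)
            else if iv = m + 1 then w else w2)
        rw [if_neg (by omega : ¬ jv = 0)]
        by_cases hi0 : iv = 0
        · rw [if_pos hi0, hi0]
          by_cases hjm : jv ≤ m
          · rw [if_pos hjm, K.ds_lt m 0 m (by omega) (by omega) (cN jv),
              hcyc 0 jv (by omega) (by omega),
              hVd (jv - 1) (by omega), if_pos (by omega : jv - 1 + 1 ≤ m)]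
          · rw [if_neg hjm]
            by_cases hjm1 : jv = m + 1
            · rw [if_pos hjm1, hwf 0 (by omega), hVd (jv - 1) (by omega),
                if_neg (by omega), if_pos (by omega : jv - 1 = m)]
            · -- jv = m + 2 : entry w2
              rw [if_neg hjm1, hw20, show jv - 1 = m + 1 by omega,
                hVd (m + 1) (by omega), if_neg (by omega), if_neg (by omega)]
        · rw [if_neg hi0]
          by_cases him : iv ≤ m
          · rw [if_pos him]
            by_cases hjm : jv ≤ m
            · rw [if_pos hjm]
              exact K.dsPair m iv (jv - 1) (by omega) (by omega) (by omega) _ _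
                (hcyc iv jv (by omega) (by omega))
            · rw [if_neg hjm]
              by_cases hjm1 : jv = m + 1
              · rw [if_pos hjm1, hwf iv (by omega), show jv - 1 = m by omega,
                  K.ds_self (m + 1) m (by omega)]
              · -- jv = m + 2 : entry w2
                rw [if_neg hjm1, hw2 iv (by omega) (by omega) (by omega),
                  show jv - 1 = m + 1 by omega]
                exact (K.ds_succ (m + 1) m (by omega) (cN iv)).symm
          · -- iv = m + 1, jv = m + 2
            have hi2 : iv = m + 1 := by omega
            rw [if_neg him, if_pos hi2, if_neg (by omega : ¬ jv ≤ m),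
              if_neg (by omega : ¬ jv = m + 1), hi2,
              hw2 (m + 1) (by omega) (by omega) (by omega),
              show jv - 1 = m + 1 by omega, hwf (m + 1) (by omega)])
    have hUd : ∀ q, q ≤ m + 2 → K.d (m + 2) q U =
        (if q = 0 then V else if q ≤ m then K.s (m + 1) m (cN q)
          else if q = m + 1 then w else w2) :=
      fun q hq => hUf0 ⟨q, by omega⟩ (show q ≠ m + 3 by omega)
    have hWd : ∀ q, q ≤ m + 2 → K.d (m + 1) q (K.d (m + 2) (m + 3) U)
        = K.d (m + 1) (m + 2) (K.d (m + 2) q U) := by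
      intro q hq
      have h := K.dd (m + 1) q (m + 3) (by omega) (by omega) U
      rwa [show m + 3 - 1 = m + 2 by omega] at h
    refine ⟨K.d (m + 1) (m + 2) V, L.d_mem (m + 1) (m + 2) (by omega) V hVL,
      K.d (m + 2) (m + 3) U, ?_, ?_, ?_, ?_⟩
    · rw [hWd 0 (by omega), hUd 0 (by omega), if_pos rfl]
    · intro q hq1 hq2
      rw [hWd q (by omega), hUd q (by omega), if_neg (by omega), if_pos (by omega : q ≤ m)]
      have egt := K.ds_gt m (m + 2) m (by omega) (by omega) (cN q)
      rw [show m + 2 - 1 = m + 1 by omega] at egt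
      have h2 := hcyc q (m + 2) (by omega) (by omega)
      rw [show m + 2 - 1 = m + 1 by omega] at h2
      rw [egt, ← h2]
    · rw [hWd (m + 1) (by omega), hUd (m + 1) (by omega), if_neg (by omega),
        if_neg (by omega), if_pos rfl, hwf (m + 2) (by omega)]
    · rw [hWd (m + 2) (by omega), hUd (m + 2) (by omega), if_neg (by omega),
        if_neg (by omega), if_neg (by omega), hw2k]

end SSetC

open SSetC in
/-- **relative Key Lemma.** Let `(K, L)` be a pair of Kan complexes,
`c = (l, x_1, …, x_n)` a boundary (of simplices of dimension `m+1`, so `n = m+2`)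
with `l = c 0 ∈ L`, let `1 ≤ k`, and let `x_k'` satisfy `d_i x_k = d_i x_k'` for
`1 ≤ i ≤ m+1` with `d_0 x_k, d_0 x_k' ∈ L`.  Then there exists `l' ∈ L` such that
`(l', x_1, …, x_k', …, x_n)` is a boundary if and only if `x_k` is homotopic to
`x_k'` relative to `L`. -/
theorem relative_key_lemma (K : SSetC) (hK : K.IsKan)
    (L : Subcomplex K) (hL : L.IsKan) (m : ℕ)
    (c : Fin (m + 3) → K.obj (m + 1))
    (hl : c 0 ∈ L.mem (m + 1))
    (hc : K.IsBoundary c)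
    (k : Fin (m + 3)) (hk : 1 ≤ (k : ℕ))
    (xk' : K.obj (m + 1))
    (hfaces : ∀ i : ℕ, 1 ≤ i → i ≤ m + 1 → K.d m i (c k) = K.d m i xk')
    (h0 : K.d m 0 (c k) ∈ L.mem m) (h0' : K.d m 0 xk' ∈ L.mem m) :
    (∃ l' ∈ L.mem (m + 1),
        K.IsBoundary (Function.update (Function.update c k xk') 0 l')) ↔
      K.HomotopicRel L (c k) xk' := by
  classical
  obtain ⟨w, hwb⟩ := hc
  set cN : ℕ → K.obj (m + 1) := fun j => if h : j < m + 3 then c ⟨j, h⟩ else c 0 with hcNdef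
  have hcN : ∀ (j : ℕ) (h : j < m + 3), cN j = c ⟨j, h⟩ := fun j h => dif_pos h
  have hwf : ∀ j, j ≤ m + 2 → K.d (m + 1) j w = cN j := by
    intro j hj
    rw [hcN j (by omega)]
    exact congrFun hwb ⟨j, by omega⟩
  have hcyc : ∀ i j : ℕ, i < j → j ≤ m + 2 → K.d m i (cN j) = K.d m (j - 1) (cN i) := by
    intro i j h1 h2
    rw [← hwf j h2, ← hwf i (by omega)]
    exact K.dd m i j h1 h2 w
  have hck : cN (k : ℕ) = c k := by rw [hcN _ k.isLt]
  have hl0 : cN 0 ∈ L.mem (m + 1) := by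
    rw [hcN 0 (by omega)]
    exact hl
  have hk0 : k ≠ 0 := fun h => by simp [h] at hk
  have hkle : (k : ℕ) ≤ m + 2 := by have := k.isLt; omega
  constructor
  · -- boundary data → relative homotopy
    rintro ⟨l', hl'L, x, hxb⟩
    have hx0 : K.d (m + 1) 0 x = l' := by
      have h := congrFun hxb 0
      rw [Function.update_self] at h
      simpa [SSetC.bdry] using h
    have hxk : K.d (m + 1) (k : ℕ) x = xk' := by
      have h := congrFun hxb k
      rwa [Function.update_of_ne hk0, Function.update_self] at h
    have hxj : ∀ j, j ≤ m + 2 → j ≠ 0 → j ≠ (k : ℕ) → K.d (m + 1) j x = cN j := by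
      intro j hj hj0 hjk
      have hne0 : (⟨j, by omega⟩ : Fin (m + 3)) ≠ 0 := by
        simp only [ne_eq, Fin.ext_iff, Fin.val_zero]
        omega
      have hnek : (⟨j, by omega⟩ : Fin (m + 3)) ≠ k := by
        simp only [ne_eq, Fin.ext_iff]
        omega
      have h := congrFun hxb (⟨j, by omega⟩ : Fin (m + 3))
      rw [Function.update_of_ne hne0, Function.update_of_ne hnek] at h
      rw [hcN j (by omega)]
      exact h
    obtain ⟨hLs, hhLs, H, hH0, hHd, hHm1, hHm2⟩ :=
      K.key_fwd hK L hL m cN (k : ℕ) hk hkle hcyc w hwf hl0 xk' l' hl'L x hx0 hxk hxj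
    refine ⟨hfaces, h0, h0', hLs, hhLs, H, ?_⟩
    funext i
    obtain ⟨iv, hib⟩ := i
    show K.d (m + 1) iv H = (if iv = 0 then hLs
      else if iv < m + 1 then K.s m m (K.d m iv (c k))
      else if iv = m + 1 then c k else xk')
    by_cases h1 : iv = 0
    · rw [if_pos h1, h1, hH0]
    · rw [if_neg h1]
      by_cases h2 : iv < m + 1
      · rw [if_pos h2, hHd iv (by omega) (by omega), hck]
      · rw [if_neg h2]
        by_cases h3 : iv = m + 1
        · rw [if_pos h3, h3, hHm1, hck]
        · rw [if_neg h3, show iv = m + 2 by omega, hHm2]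
  · -- relative homotopy → boundary data
    rintro ⟨hfe, hm0, hm0', hLs, hhLs, x, hxb⟩
    have hq : ∀ (q : ℕ) (h : q < m + 3), K.d (m + 1) q x =
        (if q = 0 then hLs else if q < m + 1 then K.s m m (K.d m q (c k))
          else if q = m + 1 then c k else xk') :=
      fun q h => congrFun hxb ⟨q, h⟩
    have hx0 : K.d (m + 1) 0 x = hLs := by
      have h := hq 0 (by omega)
      rwa [if_pos rfl] at h
    have hxd : ∀ i, 1 ≤ i → i ≤ m → K.d (m + 1) i x = K.s m m (K.d m i (cN (k : ℕ))) := by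
      intro i h1 h2
      have h := hq i (by omega)
      rwa [if_neg (by omega), if_pos (by omega), ← hck] at h
    have hxm1 : K.d (m + 1) (m + 1) x = cN (k : ℕ) := by
      have h := hq (m + 1) (by omega)
      rwa [if_neg (by omega), if_neg (by omega), if_pos rfl, ← hck] at h
    have hxm2 : K.d (m + 1) (m + 2) x = xk' := by
      have h := hq (m + 2) (by omega)
      rwa [if_neg (by omega), if_neg (by omega), if_neg (by omega)] at h
    obtain ⟨l', hl'L, w2, e0, ek, erest⟩ :=
      K.key_rev hK L hL m cN (k : ℕ) hk hkle hcyc w hwf hl0 xk' hLs hhLs x hx0 hxd hxm1 hxm2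
    refine ⟨l', hl'L, w2, ?_⟩
    funext i
    obtain ⟨iv, hib⟩ := i
    show K.d (m + 1) iv w2
      = Function.update (Function.update c k xk') 0 l' ⟨iv, hib⟩
    by_cases h1 : iv = 0
    · have hi : (⟨iv, hib⟩ : Fin (m + 3)) = 0 := by
        simp only [Fin.ext_iff, Fin.val_zero]
        omega
      rw [hi, Function.update_self, h1, e0]
    · have hi : (⟨iv, hib⟩ : Fin (m + 3)) ≠ 0 := by
        simp only [ne_eq, Fin.ext_iff, Fin.val_zero]
        omega
      rw [Function.update_of_ne hi]
      by_cases h2 : iv = (k : ℕ)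
      · have hik : (⟨iv, hib⟩ : Fin (m + 3)) = k := by
          simp only [Fin.ext_iff]
          omega
        rw [hik, Function.update_self, h2, ek]
      · have hik : (⟨iv, hib⟩ : Fin (m + 3)) ≠ k := by
          simp only [ne_eq, Fin.ext_iff]
          omega
        rw [Function.update_of_ne hik, ← hcN iv (by omega)]
        exact erest iv (by omega) h1 h2
end

section
/- For every pointed Kan complex (K,⋆) and every n ≥ 1, the homotopy group π_n(K,⋆) is a well-defined group: the product [x][y] := [xy] is independent of the choice of representatives x, y and of the filling xy; the class [⋆] is a two-sided identity; every class has an inverse; and the product is associative. Moreover, for n ≥ 2 this group is abelian. -/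
namespace SSetC

variable {K : SSetC}

lemma isSph_d (b : K.obj 0) {m : ℕ} {x : K.obj (m + 1)} (hx : K.IsSph b x) {i : ℕ}
    (hi : i ≤ m + 1) : K.d m i x = K.basept b m :=
  hx ⟨i, by omega⟩

lemma d_s_sph (b : K.obj 0) {m : ℕ} {a : K.obj (m + 1)} (ha : K.IsSph b a) {j : ℕ}
    (hj : j ≤ m + 1) : ∀ i ≤ m + 2, K.d (m + 1) i (K.s (m + 1) j a) =
      if i = j ∨ i = j + 1 then a else K.basept b (m + 1) := by
  intro i hi
  rcases Nat.lt_trichotomy i j with h | h | h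
  · rw [K.ds_lt m i j h hj, isSph_d b ha (by omega), K.s_basept b m (j - 1) (by omega),
      if_neg (by omega)]
  · rw [h, K.ds_self (m + 1) j hj, if_pos (Or.inl rfl)]
  · rcases Nat.lt_or_ge i (j + 2) with h2 | h2
    · have hij : i = j + 1 := by omega
      rw [hij, K.ds_succ (m + 1) j hj, if_pos (Or.inr rfl)]
    · rw [K.ds_gt m i j (by omega) (by omega), isSph_d b ha (by omega),
        K.s_basept b m j (by omega), if_neg (by omega)]

/-- `w` has the boundary given (above position `p`) by the row `R`. -/
def HasBdry (K : SSetC) (b : K.obj 0) {ℓ : ℕ} (p : ℕ) (w : K.obj (ℓ + 2))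
    (R : ℕ → K.obj (ℓ + 1)) : Prop :=
  ∀ i ≤ ℓ + 2, K.d (ℓ + 1) i w = if i < p then K.basept b (ℓ + 1) else R (i - p)

lemma hasBdry_congr {b : K.obj 0} {ℓ p : ℕ} {w : K.obj (ℓ + 2)} {R R' : ℕ → K.obj (ℓ + 1)}
    (h : K.HasBdry b p w R) (e : ∀ j, p + j ≤ ℓ + 2 → R j = R' j) : K.HasBdry b p w R' := by
  intro i hi
  rw [h i hi]
  split_ifs with hc
  · rfl
  · rw [e (i - p) (by omega)]

lemma hasBdry_degen (b : K.obj 0) {ℓ p t : ℕ} {a : K.obj (ℓ + 1)} (ha : K.IsSph b a)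
    (ht : p + t + 1 ≤ ℓ + 2) :
    K.HasBdry b p (K.s (ℓ + 1) (p + t) a)
      (fun s => if s = t ∨ s = t + 1 then a else K.basept b (ℓ + 1)) := by
  intro i hi
  simp only []
  rw [d_s_sph b ha (by omega) i hi]
  split_ifs <;> first | rfl | omega

lemma hasBdry_star (b : K.obj 0) {ℓ p : ℕ} :
    K.HasBdry b p (K.basept b (ℓ + 2)) (fun _ => K.basept b (ℓ + 1)) := by
  intro i hi
  simp only []
  rw [K.d_basept b (ℓ + 1) i (by omega), ite_self]

/-- ℕ-indexed horn filling. -/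
lemma isKan_nat (hK : K.IsKan) (n k : ℕ) (hk : k ≤ n + 2) (c : ℕ → K.obj (n + 1))
    (hc : ∀ i j : ℕ, i ≠ k → j ≠ k → i < j → j ≤ n + 2 →
      K.d n i (c j) = K.d n (j - 1) (c i)) :
    ∃ x : K.obj (n + 2), ∀ i : ℕ, i ≤ n + 2 → i ≠ k → K.d (n + 1) i x = c i := by
  have hcompat : K.HornCompat (m := n + 1) k (fun i => c i) := by
    intro i j hik hjk hij
    exact hc i j hik hjk hij (Nat.lt_succ_iff.mp j.isLt)
  obtain ⟨x, hx⟩ := hK (n + 1) k (by omega) (fun i => c i) hcompat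
  exact ⟨x, fun i hi hik => hx ⟨i, by omega⟩ hik⟩

/-- Filling of an all-spherical horn: the missing face is spherical. -/
lemma fill_sph (hK : K.IsKan) (b : K.obj 0) (m k : ℕ) (hk : k ≤ m + 2)
    (c : ℕ → K.obj (m + 1)) (hc : ∀ i ≤ m + 2, K.IsSph b (c i)) :
    ∃ w : K.obj (m + 2), (∀ i ≤ m + 2, i ≠ k → K.d (m + 1) i w = c i) ∧
      K.IsSph b (K.d (m + 1) k w) := by
  obtain ⟨w, hw⟩ := isKan_nat hK m k hk c (fun i j hik hjk hij hj => by
    rw [isSph_d b (hc j hj) (by omega), isSph_d b (hc i (by omega)) (by omega)])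
  refine ⟨w, fun i hi hik => hw i hi hik, fun i => ?_⟩
  have hilt : (i : ℕ) < m + 2 := i.isLt
  rcases Nat.lt_or_ge (i : ℕ) k with h | h
  · rw [K.dd m (i : ℕ) k h (by omega) w, hw (i : ℕ) (by omega) (by omega),
      isSph_d b (hc (i : ℕ) (by omega)) (by omega)]
  · have h2 := K.dd m k ((i : ℕ) + 1) (by omega) (by omega) w
    simp only [Nat.add_sub_cancel] at h2
    rw [← h2, hw ((i : ℕ) + 1) (by omega) (by omega),
      isSph_d b (hc ((i : ℕ) + 1) (by omega)) (by omega)]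

/-- Filling a horn in dimension `m+3` and taking the missing face. -/
lemma fill_master (hK : K.IsKan) (m k : ℕ) (hk : k ≤ m + 3) (Wb : ℕ → K.obj (m + 2))
    (compat : ∀ i j : ℕ, i ≠ k → j ≠ k → i < j → j ≤ m + 3 →
      K.d (m + 1) i (Wb j) = K.d (m + 1) (j - 1) (Wb i)) :
    ∃ w : K.obj (m + 2), ∀ i ≤ m + 2,
      K.d (m + 1) i w = if i < k then K.d (m + 1) (k - 1) (Wb i)
        else K.d (m + 1) k (Wb (i + 1)) := by
  obtain ⟨X, hX⟩ := isKan_nat hK (m + 1) k hk Wb compat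
  refine ⟨K.d (m + 2) k X, fun i hi => ?_⟩
  split_ifs with h
  · rw [K.dd (m + 1) i k h (by omega) X, hX i (by omega) (by omega)]
  · have h2 := K.dd (m + 1) k (i + 1) (by omega) (by omega) X
    simp only [Nat.add_sub_cancel] at h2
    rw [← h2, hX (i + 1) (by omega) (by omega)]

/-- The master combinatorial lemma: filling a horn whose faces have known boundaries
concentrated in a window starting at position `p`. -/
lemma masterG (hK : K.IsKan) (b : K.obj 0) (ℓ p k' : ℕ) (hk' : p + k' ≤ ℓ + 3)
    (Blk : ℕ → K.obj (ℓ + 2)) (E : ℕ → ℕ → K.obj (ℓ + 1))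
    (hB : ∀ o, o ≠ k' → p + o ≤ ℓ + 3 → K.HasBdry b p (Blk o) (E o))
    (hE : ∀ o1 o2, o1 < o2 → p + o2 ≤ ℓ + 3 → o1 ≠ k' → o2 ≠ k' → E o2 o1 = E o1 (o2 - 1)) :
    ∃ w : K.obj (ℓ + 2), K.HasBdry b p w
      (fun j => if j < k' then E j (k' - 1) else E (j + 1) k') := by
  have hcomp : ∀ i j : ℕ, i ≠ p + k' → j ≠ p + k' → i < j → j ≤ ℓ + 3 →
      K.d (ℓ + 1) i ((fun t => if t < p then K.basept b (ℓ + 2) else Blk (t - p)) j) =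
      K.d (ℓ + 1) (j - 1) ((fun t => if t < p then K.basept b (ℓ + 2) else Blk (t - p)) i) := by
    simp only []
    intro i j hik hjk hij hj
    by_cases hjp : j < p
    · rw [if_pos hjp, if_pos (show i < p by omega), K.d_basept b (ℓ + 1) i (by omega),
        K.d_basept b (ℓ + 1) (j - 1) (by omega)]
    · rw [if_neg hjp]
      by_cases hip : i < p
      · rw [if_pos hip, K.d_basept b (ℓ + 1) (j - 1) (by omega),
          hB (j - p) (by omega) (by omega) i (by omega), if_pos hip]
      · rw [if_neg hip, hB (j - p) (by omega) (by omega) i (by omega),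
          hB (i - p) (by omega) (by omega) (j - 1) (by omega),
          if_neg hip, if_neg (show ¬ j - 1 < p by omega),
          hE (i - p) (j - p) (by omega) (by omega) (by omega) (by omega)]
        congr 1
        omega
  obtain ⟨w, hw⟩ := fill_master hK ℓ (p + k') hk'
      (fun t => if t < p then K.basept b (ℓ + 2) else Blk (t - p)) hcomp
  · refine ⟨w, fun i hi => ?_⟩
    show _ = if i < p then K.basept b (ℓ + 1)
      else if i - p < k' then E (i - p) (k' - 1) else E (i - p + 1) k'
    rw [hw i hi]
    by_cases hip : i < p
    · rw [if_pos (show i < p + k' by omega), if_pos hip, if_pos hip,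
        K.d_basept b (ℓ + 1) _ (by omega)]
    · by_cases hik : i - p < k'
      · rw [if_pos (show i < p + k' by omega), if_neg hip,
          hB (i - p) (by omega) (by omega) (p + k' - 1) (by omega), if_neg (by omega),
          if_neg hip, if_pos hik]
        congr 1
        omega
      · rw [if_neg (show ¬ i < p + k' by omega), if_neg (show ¬ i + 1 < p by omega),
          hB (i + 1 - p) (by omega) (by omega) (p + k') (by omega), if_neg (by omega),
          if_neg hip, if_neg hik, show i + 1 - p = i - p + 1 by omega,
          show p + k' - p = k' by omega]

/-- The row `(p, q, r)`. -/
def row3 {α : Type} (p q r : α) : ℕ → α := fun j => if j = 0 then p else if j = 1 then q else r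

/-- `W3 b m p q r` : there is an `(m+2)`-simplex with boundary
`(⋆, …, ⋆, p, q, r)` (entries at positions `m`, `m+1`, `m+2`). -/
def W3 (K : SSetC) (b : K.obj 0) (m : ℕ) (p q r : K.obj (m + 1)) : Prop :=
  ∃ w : K.obj (m + 2), K.HasBdry b m w (row3 p q r)

lemma w3_iff_mulWitness (b : K.obj 0) {m : ℕ} {x y z : K.obj (m + 1)} :
    K.W3 b m y z x ↔ K.MulWitness b x y z := by
  constructor
  · rintro ⟨w, hw⟩
    refine ⟨w, funext fun i => ?_⟩
    show K.d (m + 1) (i : ℕ) w = K.mulTuple b x y z i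
    rw [hw (i : ℕ) (Nat.lt_succ_iff.mp i.isLt)]
    show _ = if (i : ℕ) < m then K.basept b (m + 1) else if (i : ℕ) = m then y
      else if (i : ℕ) = m + 1 then z else x
    simp only [row3]
    split_ifs <;> first | rfl | omega
  · rintro ⟨w, hw⟩
    refine ⟨w, fun i hi => ?_⟩
    have h : K.d (m + 1) i w = if i < m then K.basept b (m + 1) else if i = m then y
        else if i = m + 1 then z else x := congrFun hw ⟨i, by omega⟩
    rw [h]
    simp only [row3]
    split_ifs <;> first | rfl | omega

lemma w3_iff_homotopic (b : K.obj 0) {m : ℕ} {x y : K.obj (m + 1)} (hx : K.IsSph b x) :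
    K.W3 b m (K.basept b (m + 1)) x y ↔ K.Homotopic x y := by
  have key : ∀ i : ℕ, i ≤ m + 2 →
      (if i < m then K.basept b (m + 1) else row3 (K.basept b (m + 1)) x y (i - m)) =
      (if i < m + 1 then K.s m m (K.d m i x) else if i = m + 1 then x else y) := by
    intro i hi
    by_cases h1 : i < m + 1
    · rw [if_pos h1, isSph_d b hx (by omega), K.s_basept b m m (le_refl m)]
      simp only [row3]
      split_ifs <;> first | rfl | omega
    · rw [if_neg h1]
      simp only [row3]
      split_ifs <;> first | rfl | omega
  constructor
  · rintro ⟨w, hw⟩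
    refine ⟨w, funext fun i => ?_⟩
    show K.d (m + 1) (i : ℕ) w = K.homotopyTuple x y i
    rw [hw (i : ℕ) (Nat.lt_succ_iff.mp i.isLt), key (i : ℕ) (Nat.lt_succ_iff.mp i.isLt)]
    rfl
  · rintro ⟨w, hw⟩
    refine ⟨w, fun i hi => ?_⟩
    rw [key i hi]
    exact congrFun hw ⟨i, by omega⟩

lemma w3_unit_left (b : K.obj 0) {m : ℕ} {a : K.obj (m + 1)} (ha : K.IsSph b a) :
    K.W3 b m a a (K.basept b (m + 1)) :=
  ⟨K.s (m + 1) (m + 0) a, hasBdry_congr (hasBdry_degen b ha (by omega))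
    (by intro t ht; simp only [row3]; split_ifs <;> first | rfl | omega)⟩

lemma w3_unit_right (b : K.obj 0) {m : ℕ} {a : K.obj (m + 1)} (ha : K.IsSph b a) :
    K.W3 b m (K.basept b (m + 1)) a a :=
  ⟨K.s (m + 1) (m + 1) a, hasBdry_congr (hasBdry_degen b ha (by omega))
    (by intro t ht; simp only [row3]; split_ifs <;> first | rfl | omega)⟩

lemma w3_MA (hK : K.IsKan) (b : K.obj 0) {m : ℕ} {α β γ β' γ' δ : K.obj (m + 1)}
    (h1 : K.W3 b m α β γ) (h2 : K.W3 b m α β' γ') (h3 : K.W3 b m γ γ' δ) :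
    K.W3 b m β β' δ := by
  obtain ⟨w1, hw1⟩ := h1; obtain ⟨w2, hw2⟩ := h2; obtain ⟨w3, hw3⟩ := h3
  obtain ⟨w, hw⟩ := masterG hK b m m 2 (by omega)
    (fun o => if o = 0 then w1 else if o = 1 then w2 else w3)
    (fun o => if o = 0 then row3 α β γ else if o = 1 then row3 α β' γ'
      else if o = 3 then row3 γ γ' δ else row3 α β γ)
    (by
      intro o hne ho
      have ho' : o ≤ 3 := by omega
      interval_cases o
      · simpa using hw1
      · simpa using hw2
      · omega
      · simpa using hw3)
    (by
      intro o1 o2 h12 hb h1k h2k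
      have hb1 : o1 ≤ 2 := by omega
      have hb2 : o2 ≤ 3 := by omega
      interval_cases o2 <;> interval_cases o1 <;> simp_all [row3])
  exact ⟨w, hasBdry_congr hw (by
    intro j hj
    have hj' : j ≤ 2 := by omega
    interval_cases j <;> simp [row3])⟩

lemma w3_MB (hK : K.IsKan) (b : K.obj 0) {m : ℕ} {α β γ σ τ ρ : K.obj (m + 1)}
    (h1 : K.W3 b m α β γ) (h2 : K.W3 b m β σ τ) (h3 : K.W3 b m γ ρ τ) :
    K.W3 b m α σ ρ := by
  obtain ⟨w1, hw1⟩ := h1; obtain ⟨w2, hw2⟩ := h2; obtain ⟨w3, hw3⟩ := h3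
  obtain ⟨w, hw⟩ := masterG hK b m m 1 (by omega)
    (fun o => if o = 0 then w1 else if o = 2 then w2 else w3)
    (fun o => if o = 0 then row3 α β γ else if o = 2 then row3 β σ τ
      else if o = 3 then row3 γ ρ τ else row3 α β γ)
    (by
      intro o hne ho
      have ho' : o ≤ 3 := by omega
      interval_cases o
      · simpa using hw1
      · omega
      · simpa using hw2
      · simpa using hw3)
    (by
      intro o1 o2 h12 hb h1k h2k
      have hb1 : o1 ≤ 2 := by omega
      have hb2 : o2 ≤ 3 := by omega
      interval_cases o2 <;> interval_cases o1 <;> simp_all [row3])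
  exact ⟨w, hasBdry_congr hw (by
    intro j hj
    have hj' : j ≤ 2 := by omega
    interval_cases j <;> simp [row3])⟩

lemma w3_MC (hK : K.IsKan) (b : K.obj 0) {m : ℕ} {α β γ σ τ ρ : K.obj (m + 1)}
    (h1 : K.W3 b m α β γ) (h2 : K.W3 b m α σ τ) (h3 : K.W3 b m β σ ρ) :
    K.W3 b m γ τ ρ := by
  obtain ⟨w1, hw1⟩ := h1; obtain ⟨w2, hw2⟩ := h2; obtain ⟨w3, hw3⟩ := h3
  obtain ⟨w, hw⟩ := masterG hK b m m 3 (by omega)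
    (fun o => if o = 0 then w1 else if o = 1 then w2 else w3)
    (fun o => if o = 0 then row3 α β γ else if o = 1 then row3 α σ τ
      else if o = 2 then row3 β σ ρ else row3 α β γ)
    (by
      intro o hne ho
      have ho' : o ≤ 3 := by omega
      interval_cases o
      · simpa using hw1
      · simpa using hw2
      · simpa using hw3
      · omega)
    (by
      intro o1 o2 h12 hb h1k h2k
      have hb1 : o1 ≤ 2 := by omega
      have hb2 : o2 ≤ 3 := by omega
      interval_cases o2 <;> interval_cases o1 <;> simp_all [row3])
  exact ⟨w, hasBdry_congr hw (by
    intro j hj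
    have hj' : j ≤ 2 := by omega
    interval_cases j <;> simp [row3])⟩

lemma exists_prodW (hK : K.IsKan) (b : K.obj 0) {m : ℕ} (x y : K.obj (m + 1))
    (hx : K.IsSph b x) (hy : K.IsSph b y) :
    ∃ z : K.obj (m + 1), K.IsSph b z ∧ K.W3 b m y z x := by
  obtain ⟨w, hw, hsph⟩ := fill_sph hK b m (m + 1) (by omega)
    (fun i => if i = m then y else if i = m + 2 then x else K.basept b (m + 1))
    (by
      intro i hi
      show K.IsSph b (if i = m then y else if i = m + 2 then x else K.basept b (m + 1))
      split_ifs
      · exact hy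
      · exact hx
      · exact K.basept_isSph b m)
  refine ⟨K.d (m + 1) (m + 1) w, hsph, w, fun i hi => ?_⟩
  by_cases h : i = m + 1
  · subst h
    rw [if_neg (by omega)]
    simp only [row3]
    rw [if_neg (by omega), if_pos (by omega)]
  · rw [hw i hi h]
    simp only [row3]
    split_ifs <;> first | rfl | omega

lemma exists_linvW (hK : K.IsKan) (b : K.obj 0) {m : ℕ} (x : K.obj (m + 1))
    (hx : K.IsSph b x) :
    ∃ a : K.obj (m + 1), K.IsSph b a ∧ K.W3 b m x (K.basept b (m + 1)) a := by
  obtain ⟨w, hw, hsph⟩ := fill_sph hK b m (m + 2) (by omega)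
    (fun i => if i = m then x else K.basept b (m + 1))
    (by
      intro i hi
      show K.IsSph b (if i = m then x else K.basept b (m + 1))
      split_ifs
      · exact hx
      · exact K.basept_isSph b m)
  refine ⟨K.d (m + 1) (m + 2) w, hsph, w, fun i hi => ?_⟩
  by_cases h : i = m + 2
  · subst h
    rw [if_neg (by omega)]
    simp only [row3]
    rw [if_neg (by omega), if_neg (by omega)]
  · rw [hw i hi h]
    simp only [row3]
    split_ifs <;> first | rfl | omega

/-- The row `(p, q, r, t)`. -/
def row4 {α : Type} (p q r t : α) : ℕ → α :=
  fun j => if j = 0 then p else if j = 1 then q else if j = 2 then r else t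

set_option maxHeartbeats 2000000 in
lemma w3_comm (hK : K.IsKan) (b : K.obj 0) {n : ℕ} {x y z1 z2 : K.obj (n + 2)}
    (hx : K.IsSph b x) (hy : K.IsSph b y) (hz1 : K.IsSph b z1) (hz2 : K.IsSph b z2)
    (h1 : K.W3 b (n + 1) y z1 x) (h2 : K.W3 b (n + 1) x z2 y) :
    K.W3 b (n + 1) (K.basept b (n + 2)) z1 z2 := by
  obtain ⟨w1, hw1⟩ := h1; obtain ⟨w2, hw2⟩ := h2
  have hw1' : K.HasBdry b n w1 (row4 (K.basept b (n + 2)) y z1 x) := by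
    intro i hi
    rw [hw1 i hi]
    simp only [row3, row4]
    split_ifs <;> first | rfl | omega
  have hw2' : K.HasBdry b n w2 (row4 (K.basept b (n + 2)) x z2 y) := by
    intro i hi
    rw [hw2 i hi]
    simp only [row3, row4]
    split_ifs <;> first | rfl | omega
  -- Step 1 : a simplex with boundary (z1, z1, y, y)
  obtain ⟨v3, hv3⟩ := masterG hK b (n + 1) n 2 (by omega)
    (fun o => if o ≤ 1 then K.s (n + 2) (n + 0) z1 else K.s (n + 2) (n + 2) y)
    (fun o => if o ≤ 1 then (fun s => if s = 0 ∨ s = 0 + 1 then z1 else K.basept b (n + 2))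
      else (fun s => if s = 2 ∨ s = 2 + 1 then y else K.basept b (n + 2)))
    (by
      intro o hne ho
      have ho' : o ≤ 4 := by omega
      interval_cases o
      · simpa using hasBdry_degen (ℓ := n + 1) (p := n) (t := 0) b hz1 (by omega)
      · simpa using hasBdry_degen (ℓ := n + 1) (p := n) (t := 0) b hz1 (by omega)
      · omega
      · simpa using hasBdry_degen (ℓ := n + 1) (p := n) (t := 2) b hy (by omega)
      · simpa using hasBdry_degen (ℓ := n + 1) (p := n) (t := 2) b hy (by omega))
    (by
      intro o1 o2 h12 hb h1k h2k
      have hb1 : o1 ≤ 3 := by omega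
      have hb2 : o2 ≤ 4 := by omega
      clear hb hK hw1 hw2 hw1' hw2'
      interval_cases o2 <;> interval_cases o1 <;> first | omega | norm_num)
  have hv3' : K.HasBdry b n v3 (row4 z1 z1 y y) := hasBdry_congr hv3 (by
    intro j hj
    have hj' : j ≤ 3 := by omega
    interval_cases j <;> simp [row4])
  -- Step 2 : a simplex with boundary (z2, x, ⋆, y)
  obtain ⟨v4, hv4⟩ := masterG hK b (n + 1) n 2 (by omega)
    (fun o => if o = 0 then K.s (n + 2) (n + 1) z2 else if o = 1 then w2
      else if o = 3 then K.s (n + 2) (n + 0) z2 else K.s (n + 2) (n + 1) y)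
    (fun o => if o = 0 then (fun s => if s = 1 ∨ s = 1 + 1 then z2 else K.basept b (n + 2))
      else if o = 1 then row4 (K.basept b (n + 2)) x z2 y
      else if o = 3 then (fun s => if s = 0 ∨ s = 0 + 1 then z2 else K.basept b (n + 2))
      else (fun s => if s = 1 ∨ s = 1 + 1 then y else K.basept b (n + 2)))
    (by
      intro o hne ho
      have ho' : o ≤ 4 := by omega
      interval_cases o
      · simpa using hasBdry_degen (ℓ := n + 1) (p := n) (t := 1) b hz2 (by omega)
      · simpa using hw2'
      · omega
      · simpa using hasBdry_degen (ℓ := n + 1) (p := n) (t := 0) b hz2 (by omega)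
      · simpa using hasBdry_degen (ℓ := n + 1) (p := n) (t := 1) b hy (by omega))
    (by
      intro o1 o2 h12 hb h1k h2k
      have hb1 : o1 ≤ 3 := by omega
      have hb2 : o2 ≤ 4 := by omega
      clear hb hK hw1 hw2 hw1' hw2' hv3 hv3'
      interval_cases o2 <;> interval_cases o1 <;> first | omega | norm_num [row4])
  have hv4' : K.HasBdry b n v4 (row4 z2 x (K.basept b (n + 2)) y) := hasBdry_congr hv4 (by
    intro j hj
    have hj' : j ≤ 3 := by omega
    interval_cases j <;> simp [row4])
  -- Step 3 : a simplex with boundary (⋆, ⋆, z1, z2)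
  obtain ⟨wf, hfin⟩ := masterG hK b (n + 1) n 0 (by omega)
    (fun o => if o = 1 then w1 else if o = 2 then K.s (n + 2) (n + 1) y
      else if o = 3 then v3 else v4)
    (fun o => if o = 1 then row4 (K.basept b (n + 2)) y z1 x
      else if o = 2 then (fun s => if s = 1 ∨ s = 1 + 1 then y else K.basept b (n + 2))
      else if o = 3 then row4 z1 z1 y y
      else if o = 4 then row4 z2 x (K.basept b (n + 2)) y
      else row4 (K.basept b (n + 2)) (K.basept b (n + 2)) (K.basept b (n + 2))
        (K.basept b (n + 2)))
    (by
      intro o hne ho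
      have ho' : o ≤ 4 := by omega
      interval_cases o
      · omega
      · simpa using hw1'
      · simpa using hasBdry_degen (ℓ := n + 1) (p := n) (t := 1) b hy (by omega)
      · simpa using hv3'
      · simpa using hv4')
    (by
      intro o1 o2 h12 hb h1k h2k
      have hb1 : o1 ≤ 3 := by omega
      have hb2 : o2 ≤ 4 := by omega
      clear hb hK hw1 hw2 hw1' hw2' hv3 hv3' hv4 hv4'
      interval_cases o2 <;> interval_cases o1 <;> first | omega | norm_num [row4])
  refine ⟨wf, fun i hi => ?_⟩
  rw [hfin i hi]
  simp only [row3, row4]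
  split_ifs <;> first | rfl | omega

lemma w3_comm' (hK : K.IsKan) (b : K.obj 0) {m : ℕ} (hm : 1 ≤ m) {x y z1 z2 : K.obj (m + 1)}
    (hx : K.IsSph b x) (hy : K.IsSph b y) (hz1 : K.IsSph b z1) (hz2 : K.IsSph b z2)
    (h1 : K.W3 b m y z1 x) (h2 : K.W3 b m x z2 y) :
    K.W3 b m (K.basept b (m + 1)) z1 z2 := by
  obtain ⟨n, rfl⟩ : ∃ n, m = n + 1 := ⟨m - 1, by omega⟩
  exact w3_comm hK b hx hy hz1 hz2 h1 h2

end SSetC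
open SSetC in
/-- For every pointed Kan complex `(K, ⋆)` and every `n = m+1 ≥ 1`
the homotopy group `π_n(K, ⋆)` is a well-defined group: the base point is a valid
representative, products `[x][y] := [xy]` exist, the product descends to a
well-defined binary operation `mul` on the quotient (independence of all choices),
`[⋆]` is a two-sided identity, inverses exist, and the product is associative;
moreover for `n ≥ 2` (i.e. `m ≥ 1`) the group is abelian. -/
theorem homotopy_group_welldefined (K : SSetC) (hK : K.IsKan) (b : K.obj 0) (m : ℕ) :
    K.IsSph b (K.basept b (m + 1)) ∧
    (∀ x y : K.obj (m + 1), K.IsSph b x → K.IsSph b y →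
      ∃ z : K.obj (m + 1), K.IsSph b z ∧ K.MulWitness b x y z) ∧
    (∃ mul : K.piGrp b m → K.piGrp b m → K.piGrp b m,
      K.MulDescends b m mul ∧
      (∃ e : K.piGrp b m,
        (∀ x : K.Sph b m, x.1 = K.basept b (m + 1) → e = K.cls b m x) ∧
        (∀ a : K.piGrp b m, mul e a = a) ∧
        (∀ a : K.piGrp b m, mul a e = a) ∧
        (∀ a : K.piGrp b m, ∃ a' : K.piGrp b m, mul a' a = e ∧ mul a a' = e)) ∧
      (∀ a a' a'' : K.piGrp b m, mul (mul a a') a'' = mul a (mul a' a'')) ∧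
      (1 ≤ m → ∀ a a' : K.piGrp b m, mul a a' = mul a' a)) := by
  classical
  refine ⟨K.basept_isSph b m, fun x y hx hy => ?_, ?_⟩
  · obtain ⟨z, hz, hw⟩ := exists_prodW hK b x y hx hy
    exact ⟨z, hz, (w3_iff_mulWitness b).mp hw⟩
  have hprod : ∀ x y : K.Sph b m, ∃ z : K.Sph b m, K.W3 b m y.1 z.1 x.1 := by
    intro x y
    obtain ⟨z, hz, hw⟩ := exists_prodW hK b x.1 y.1 x.2 y.2
    exact ⟨⟨z, hz⟩, hw⟩
  choose pr hpr using hprod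
  have hsound : ∀ u v : K.Sph b m, K.W3 b m (K.basept b (m + 1)) u.1 v.1 →
      K.cls b m u = K.cls b m v := fun u v h =>
    Quot.sound ((w3_iff_homotopic b u.2).mp h)
  have hU : ∀ x y z : K.Sph b m, K.W3 b m y.1 z.1 x.1 →
      K.cls b m (pr x y) = K.cls b m z := fun x y z h =>
    hsound _ _ (w3_MB hK b (w3_unit_right b y.2) (hpr x y) h)
  have resp_r : ∀ x y y' : K.Sph b m, K.Homotopic y.1 y'.1 →
      K.cls b m (pr x y) = K.cls b m (pr x y') := by
    intro x y y' h
    have h' := (w3_iff_homotopic b y.2).mpr h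
    exact (hU x y' (pr x y) (w3_MC hK b h' (w3_unit_right b (pr x y).2) (hpr x y))).symm
  have resp_l : ∀ x x' y : K.Sph b m, K.Homotopic x.1 x'.1 →
      K.cls b m (pr x y) = K.cls b m (pr x' y) := by
    intro x x' y h
    have h' := (w3_iff_homotopic b x.2).mpr h
    exact (hU x' y (pr x y) (w3_MA hK b (w3_unit_left b y.2) (hpr x y) h')).symm
  let mul : K.piGrp b m → K.piGrp b m → K.piGrp b m :=
    Quot.lift₂ (fun x y => K.cls b m (pr x y))
      (fun x y y' h => resp_r x y y' h) (fun x x' y h => resp_l x x' y h)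
  have hmk : ∀ x y : K.Sph b m, mul (K.cls b m x) (K.cls b m y) = K.cls b m (pr x y) :=
    fun _ _ => rfl
  have hdesc : K.MulDescends b m mul := fun x y z h =>
    (hmk x y).trans (hU x y z ((w3_iff_mulWitness b).mpr h))
  let st : K.Sph b m := ⟨K.basept b (m + 1), K.basept_isSph b m⟩
  have hlid : ∀ a : K.piGrp b m, mul (K.cls b m st) a = a := by
    intro a
    induction a using Quot.ind with | _ x => ?_
    exact hdesc st x x ((w3_iff_mulWitness b).mp (w3_unit_left b x.2))
  have hrid : ∀ a : K.piGrp b m, mul a (K.cls b m st) = a := by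
    intro a
    induction a using Quot.ind with | _ x => ?_
    exact hdesc x st x ((w3_iff_mulWitness b).mp (w3_unit_right b x.2))
  have hassoc : ∀ a a' a'' : K.piGrp b m, mul (mul a a') a'' = mul a (mul a' a'') := by
    intro a a' a''
    induction a using Quot.ind with | _ x => ?_
    induction a' using Quot.ind with | _ y => ?_
    induction a'' using Quot.ind with | _ z => ?_
    exact (hU x (pr y z) (pr (pr x y) z)
      (w3_MA hK b (hpr y z) (hpr (pr x y) z) (hpr x y))).symm
  have hinvL : ∀ a : K.piGrp b m, ∃ a', mul a' a = K.cls b m st := by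
    intro a
    induction a using Quot.ind with | _ x => ?_
    obtain ⟨a0, ha0s, ha0⟩ := exists_linvW hK b x.1 x.2
    exact ⟨K.cls b m ⟨a0, ha0s⟩, hdesc ⟨a0, ha0s⟩ x st ((w3_iff_mulWitness b).mp ha0)⟩
  have hinv : ∀ a : K.piGrp b m, ∃ a', mul a' a = K.cls b m st ∧ mul a a' = K.cls b m st := by
    intro a
    obtain ⟨a', ha'⟩ := hinvL a
    obtain ⟨a'', ha''⟩ := hinvL a'
    have haa : a = a'' := by
      calc a = mul (K.cls b m st) a := (hlid a).symm
        _ = mul (mul a'' a') a := by rw [ha'']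
        _ = mul a'' (mul a' a) := hassoc _ _ _
        _ = mul a'' (K.cls b m st) := by rw [ha']
        _ = a'' := hrid a''
    exact ⟨a', ha', by rw [haa]; exact ha''⟩
  have hcomm : 1 ≤ m → ∀ a a' : K.piGrp b m, mul a a' = mul a' a := by
    intro hm a a'
    induction a using Quot.ind with | _ x => ?_
    induction a' using Quot.ind with | _ y => ?_
    exact hsound (pr x y) (pr y x)
      (w3_comm' hK b hm x.2 y.2 (pr x y).2 (pr y x).2 (hpr x y) (hpr y x))
  exact ⟨mul, hdesc, ⟨K.cls b m st,
    fun x hx => by rw [show st = x from Subtype.ext hx.symm],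
    hlid, hrid, hinv⟩, hassoc, hcomm⟩
end

section
/- Every n-connected minimal pointed Kan complex (K,⋆) is trivial up to dimension n: K_k = {⋆_k} for all 0 ≤ k ≤ n. -/
open SSetC in
/-- Every `n`-connected minimal pointed Kan complex `(K, ⋆)` is
trivial up to dimension `n`: `K_k = {⋆_k}` for all `k ≤ n`. -/
theorem connected_minimal_trivial (K : SSetC) (hK : K.IsKan) (b : K.obj 0) (n : ℕ)
    (hmin : K.Minimal)
    (hconn : ∀ k ≤ n, ∀ x : K.obj k, K.IsSph' b x → K.Homotopic x (K.basept b k)) :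
    ∀ k ≤ n, ∀ x : K.obj k, x = K.basept b k := by
  intro k
  induction k with
  | zero =>
    intro hk x
    exact hmin 0 x b trivial (hconn 0 hk x trivial)
  | succ k ih =>
    intro hk x
    have ih' : ∀ y : K.obj k, y = K.basept b k := ih (by omega)
    have hsph : K.IsSph b x := fun i => ih' (K.d k i x)
    have hhom := hconn (k + 1) hk x hsph
    have hbd : K.SameBdry x (K.basept b (k + 1)) := by
      funext i
      show K.d k i x = K.d k i (K.basept b (k + 1))
      rw [ih' (K.d k i x), K.d_basept b k i (Nat.lt_succ_iff.mp i.isLt)]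
    exact hmin (k + 1) x _ hbd hhom
end

section
/- For every pointed Kan complex (K,⋆) and every pointed pair (K,L,⋆) of Kan complexes, the Hurewicz map φ([x]_π) := [x]_H is a well-defined, natural group homomorphism φ : π_n(K,⋆) → H_n(K,⋆) and φ : π_n(K,L,⋆) → H_n(K,L) (integer coefficients), where on the left [x]_π denotes the homotopy class and on the right [x]_H the homology class of the simplex x. -/
namespace SSetC

attribute [local instance] Classical.propDecidable

variable (K : SSetC)

section Homology

variable (A : Type) [AddCommGroup A] (M N : Subcomplex K)

/-- The `n`-simplices of `M` not lying in `N`: a basis of the relative chain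
group `C_n(M, N; A)` (linear combinations of simplices of `M` modulo those of `N`). -/
def pSimp (n : ℕ) := {x : K.obj n // x ∈ M.mem n ∧ x ∉ N.mem n}

/-- The differential `d(x) = Σ (-1)^i d_i x` of the relative chain complex. -/
noncomputable def pDiff (n : ℕ) : (K.pSimp M N (n + 1) →₀ A) →+ (K.pSimp M N n →₀ A) :=
  Finsupp.liftAddHom fun x => ∑ i : Fin (n + 2), (-1 : ℤ) ^ (i : ℕ) •
    (if h : K.d n i x.1 ∈ N.mem n then 0 else
      Finsupp.singleAddHom (⟨K.d n i x.1,
        ⟨M.d_mem n i (Nat.lt_succ_iff.mp i.isLt) x.1 x.2.1, h⟩⟩ : K.pSimp M N n))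

/-- The group of relative `n`-cycles. -/
noncomputable def pCycles : ∀ n : ℕ, AddSubgroup (K.pSimp M N n →₀ A)
  | 0 => ⊤
  | n + 1 => (K.pDiff A M N n).ker

/-- The group of relative `n`-boundaries. -/
noncomputable def pBoundaries (n : ℕ) : AddSubgroup (K.pSimp M N n →₀ A) :=
  (K.pDiff A M N n).range

/-- The relative simplicial homology `H_n = Z_n / B_n`. -/
def pHomology (n : ℕ) :=
  K.pCycles A M N n ⧸ (K.pBoundaries A M N n).addSubgroupOf (K.pCycles A M N n)

noncomputable instance (n : ℕ) : AddCommGroup (K.pHomology A M N n) :=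
  QuotientAddGroup.Quotient.addCommGroup _

/-- The homology class of a cycle. -/
noncomputable def homCls {n : ℕ} (z : K.pCycles A M N n) : K.pHomology A M N n :=
  QuotientAddGroup.mk z

/-- The chain associated to a single simplex (zero if the simplex lies in `N`). -/
noncomputable def simpChain {n : ℕ} (a : A) (x : K.obj n) : K.pSimp M N n →₀ A :=
  if h : x ∈ M.mem n ∧ x ∉ N.mem n then Finsupp.single (⟨x, h⟩ : K.pSimp M N n) a else 0

end Homology

/-- The chain map induced by a simplicial map respecting the distinguished
subcomplexes (simplices falling into `N'` are sent to zero). -/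
noncomputable def pChainMap {K K' : SSetC} (f : SMap K K') (A : Type) [AddCommGroup A]
    (M N : Subcomplex K) (M' N' : Subcomplex K')
    (hM : ∀ n x, x ∈ M.mem n → f.app n x ∈ M'.mem n) (n : ℕ) :
    (K.pSimp M N n →₀ A) →+ (K'.pSimp M' N' n →₀ A) :=
  Finsupp.liftAddHom fun x =>
    if h : f.app n x.1 ∈ N'.mem n then 0
    else Finsupp.singleAddHom (⟨f.app n x.1, ⟨hM n x.1 x.2.1, h⟩⟩ : K'.pSimp M' N' n)

/-- `Φ` is the map induced on homology by the simplicial map `f`. -/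
def HInduces {K K' : SSetC} (f : SMap K K') (A : Type) [AddCommGroup A]
    (M N : Subcomplex K) (M' N' : Subcomplex K')
    (hM : ∀ n x, x ∈ M.mem n → f.app n x ∈ M'.mem n) (n : ℕ)
    (Φ : K.pHomology A M N n → K'.pHomology A M' N' n) : Prop :=
  ∀ (z : K.pCycles A M N n) (w : K'.pCycles A M' N' n),
    (w : K'.pSimp M' N' n →₀ A) = pChainMap f A M N M' N' hM n (z : K.pSimp M N n →₀ A) →
      Φ (K.homCls A M N z) = K'.homCls A M' N' w

end SSetC
namespace SSetC

/-- `F` is the map induced on the homotopy groups `π_{m+1}` by the pointed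
simplicial map `f` (i.e. `F[x] = [f(x)]`). -/
def Induces {K K' : SSetC} (b : K.obj 0) (b' : K'.obj 0) (m : ℕ) (f : SMap K K')
    (F : K.piGrp b m → K'.piGrp b' m) : Prop :=
  ∀ (x : K.Sph b m) (y : K'.Sph b' m), f.app (m + 1) x.1 = y.1 →
    F (K.cls b m x) = K'.cls b' m y

variable (K : SSetC)

/-- The `n`-th homology group `H_n(K, ⋆; ℤ)` of a pointed simplicial set. -/
noncomputable def Hpt (b : K.obj 0) (n : ℕ) : Type :=
  K.pHomology ℤ K.topSub (K.ptSub b) n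

noncomputable instance (b : K.obj 0) (n : ℕ) : AddCommGroup (K.Hpt b n) :=
  inferInstanceAs (AddCommGroup (K.pHomology ℤ K.topSub (K.ptSub b) n))

/-- `φ` is the Hurewicz map `π_{m+1}(K,⋆) → H_{m+1}(K,⋆)`, `[x]_π ↦ [x]_H`. -/
def HurewiczChar (b : K.obj 0) (m : ℕ)
    (φ : K.piGrp b m → K.Hpt b (m + 1)) : Prop :=
  ∀ (x : K.Sph b m) (z : K.pCycles ℤ K.topSub (K.ptSub b) (m + 1)),
    (z : K.pSimp K.topSub (K.ptSub b) (m + 1) →₀ ℤ) =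
        K.simpChain ℤ K.topSub (K.ptSub b) (1 : ℤ) x.1 →
      φ (K.cls b m x) = K.homCls ℤ K.topSub (K.ptSub b) z

/-- The `n`-th relative homology group `H_n(K, L; ℤ)` of a simplicial pair. -/
noncomputable def Hrel (L : Subcomplex K) (n : ℕ) : Type :=
  K.pHomology ℤ K.topSub L n

noncomputable instance (L : Subcomplex K) (n : ℕ) : AddCommGroup (K.Hrel L n) :=
  inferInstanceAs (AddCommGroup (K.pHomology ℤ K.topSub L n))

/-- `φ` is the relative Hurewicz map `π_{m+1}(K,L,⋆) → H_{m+1}(K,L)`,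
`[x]_π ↦ [x]_H`. -/
def RelHurewiczChar (L : Subcomplex K) (b : K.obj 0) (m : ℕ)
    (φ : K.piRel L b m → K.Hrel L (m + 1)) : Prop :=
  ∀ (x : K.RelSph L b m) (z : K.pCycles ℤ K.topSub L (m + 1)),
    (z : K.pSimp K.topSub L (m + 1) →₀ ℤ) = K.simpChain ℤ K.topSub L (1 : ℤ) x.1 →
      φ (K.relCls L b m x) = K.homCls ℤ K.topSub L z

end SSetC

namespace SSetC
attribute [local instance] Classical.propDecidable

lemma sum_eq_two {β : Type*} [AddCommMonoid β] {n : ℕ} (f : Fin n → β) (a b : Fin n)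
    (hab : a ≠ b) (h : ∀ i, i ≠ a → i ≠ b → f i = 0) :
    ∑ i, f i = f a + f b := by
  rw [← Finset.sum_subset (Finset.subset_univ {a, b})
    (fun x _ hx => by
      simp only [Finset.mem_insert, Finset.mem_singleton, not_or] at hx
      exact h x hx.1 hx.2)]
  exact Finset.sum_pair hab

lemma sum_eq_three {β : Type*} [AddCommMonoid β] {n : ℕ} (f : Fin n → β) (a b c : Fin n)
    (hab : a ≠ b) (hac : a ≠ c) (hbc : b ≠ c) (h : ∀ i, i ≠ a → i ≠ b → i ≠ c → f i = 0) :
    ∑ i, f i = f a + f b + f c := by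
  rw [← Finset.sum_subset (Finset.subset_univ {a, b, c})
    (fun x _ hx => by
      simp only [Finset.mem_insert, Finset.mem_singleton, not_or] at hx
      exact h x hx.1 hx.2.1 hx.2.2)]
  rw [Finset.sum_insert (by simp [hab, hac]), Finset.sum_pair hbc, add_assoc]

variable (K : SSetC) (N : Subcomplex K)

lemma mem_basept {b : K.obj 0} (hb : b ∈ N.mem 0) : ∀ n, K.basept b n ∈ N.mem n
  | 0 => hb
  | n + 1 => N.s_mem n 0 (Nat.zero_le _) _ (mem_basept hb n)

lemma ch_zero {n : ℕ} {x : K.obj n} (hx : x ∈ N.mem n) :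
    K.simpChain ℤ K.topSub N 1 x = 0 := by
  unfold simpChain
  rw [dif_neg]
  tauto

lemma ch_not_mem {n : ℕ} {x : K.obj n} (hx : x ∉ N.mem n) :
    K.simpChain ℤ K.topSub N 1 x
      = Finsupp.single (⟨x, ⟨Set.mem_univ x, hx⟩⟩ : K.pSimp K.topSub N n) 1 := by
  unfold simpChain
  rw [dif_pos ⟨Set.mem_univ x, hx⟩]
  rfl

lemma pDiff_ch {n : ℕ} (w : K.obj (n + 1)) :
    K.pDiff ℤ K.topSub N n (K.simpChain ℤ K.topSub N 1 w)
      = ∑ i : Fin (n + 2), (-1 : ℤ) ^ (i : ℕ) • K.simpChain ℤ K.topSub N 1 (K.d n i w) := by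
  by_cases hw : w ∈ N.mem (n + 1)
  · rw [ch_zero K N hw, map_zero]
    refine (Finset.sum_eq_zero fun i _ => ?_).symm
    rw [ch_zero K N (N.d_mem n i (Nat.lt_succ_iff.mp i.isLt) w hw), smul_zero]
  · rw [ch_not_mem K N hw]
    unfold pDiff
    erw [Finsupp.liftAddHom_apply_single]
    rw [AddMonoidHom.finset_sum_apply]
    refine Finset.sum_congr rfl fun i _ => ?_
    by_cases h : K.d n i w ∈ N.mem n
    · rw [dif_pos h, ch_zero K N h, smul_zero]
      erw [smul_zero]
      exact AddMonoidHom.zero_apply 1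
    · rw [dif_neg h, ch_not_mem K N h]; rfl

lemma ch_cycle {n : ℕ} {x : K.obj (n + 1)}
    (h : ∀ i : Fin (n + 2), K.simpChain ℤ K.topSub N 1 (K.d n i x) = 0) :
    K.simpChain ℤ K.topSub N 1 x ∈ K.pCycles ℤ K.topSub N (n + 1) := by
  show _ ∈ (K.pDiff ℤ K.topSub N n).ker
  rw [AddMonoidHom.mem_ker, pDiff_ch]
  exact Finset.sum_eq_zero fun i _ => by rw [h i, smul_zero]

/-- two nonzero faces at positions n+1, n+2 -/
lemma homotopy_shape {n : ℕ} (w : K.obj (n + 2)) (x y : K.obj (n + 1))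
    (hx : K.d (n + 1) (n + 1) w = x) (hy : K.d (n + 1) (n + 2) w = y)
    (h0 : ∀ i : Fin (n + 3), (i : ℕ) < n + 1 → K.simpChain ℤ K.topSub N 1 (K.d (n + 1) i w) = 0) :
    K.simpChain ℤ K.topSub N 1 x - K.simpChain ℤ K.topSub N 1 y
      ∈ K.pBoundaries ℤ K.topSub N (n + 1) := by
  refine ⟨(-1 : ℤ) ^ (n + 1) • K.simpChain ℤ K.topSub N 1 w, ?_⟩
  rw [map_zsmul, pDiff_ch]
  rw [sum_eq_two _ (⟨n + 1, by omega⟩ : Fin (n + 3)) ⟨n + 2, by omega⟩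
    (by simp [Fin.ext_iff]) (fun i hi1 hi2 => by
      rw [h0 i (by simp [Fin.ext_iff] at hi1 hi2; omega), smul_zero])]
  simp only [hx, hy]
  rw [smul_add, smul_smul, smul_smul, ← pow_add, ← pow_add]
  have h1 : (-1 : ℤ) ^ (n + 1 + (n + 1)) = 1 := by rw [← two_mul, pow_mul]; simp
  have h2 : (-1 : ℤ) ^ (n + 1 + (n + 2)) = -1 := by
    have : n + 1 + (n + 2) = 2 * (n + 1) + 1 := by ring
    rw [this, pow_succ, pow_mul]; simp
  rw [h1, h2, one_smul, neg_one_smul, sub_eq_add_neg]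

/-- three nonzero faces at positions n, n+1, n+2 -/
lemma mul_shape {n : ℕ} (w : K.obj (n + 2)) (x y z : K.obj (n + 1))
    (hy : K.d (n + 1) n w = y) (hz : K.d (n + 1) (n + 1) w = z) (hx : K.d (n + 1) (n + 2) w = x)
    (h0 : ∀ i : Fin (n + 3), (i : ℕ) < n → K.simpChain ℤ K.topSub N 1 (K.d (n + 1) i w) = 0) :
    K.simpChain ℤ K.topSub N 1 x + K.simpChain ℤ K.topSub N 1 y - K.simpChain ℤ K.topSub N 1 z
      ∈ K.pBoundaries ℤ K.topSub N (n + 1) := by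
  refine ⟨(-1 : ℤ) ^ n • K.simpChain ℤ K.topSub N 1 w, ?_⟩
  rw [map_zsmul, pDiff_ch]
  rw [sum_eq_three _ (⟨n, by omega⟩ : Fin (n + 3)) ⟨n + 1, by omega⟩ ⟨n + 2, by omega⟩
    (by simp [Fin.ext_iff]) (by simp [Fin.ext_iff]) (by simp [Fin.ext_iff])
    (fun i hi1 hi2 hi3 => by
      rw [h0 i (by simp [Fin.ext_iff] at hi1 hi2 hi3; omega), smul_zero])]
  simp only [hx, hy, hz]
  rw [smul_add, smul_add, smul_smul, smul_smul, smul_smul, ← pow_add, ← pow_add, ← pow_add]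
  have e1 : (-1 : ℤ) ^ (n + n) = 1 := by rw [← two_mul, pow_mul]; simp
  have e2 : (-1 : ℤ) ^ (n + (n + 1)) = -1 := by
    have : n + (n + 1) = 2 * n + 1 := by ring
    rw [this, pow_succ, pow_mul]; simp
  have e3 : (-1 : ℤ) ^ (n + (n + 2)) = 1 := by
    have : n + (n + 2) = 2 * (n + 1) := by ring
    rw [this, pow_mul]; simp
  rw [e1, e2, e3, one_smul, one_smul, neg_one_smul]
  abel

lemma homCls_eq {n : ℕ} (z w : K.pCycles ℤ K.topSub N n)
    (h : (w : K.pSimp K.topSub N n →₀ ℤ) - (z : K.pSimp K.topSub N n →₀ ℤ)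
      ∈ K.pBoundaries ℤ K.topSub N n) :
    K.homCls ℤ K.topSub N z = K.homCls ℤ K.topSub N w := by
  unfold homCls
  erw [QuotientAddGroup.eq, AddSubgroup.mem_addSubgroupOf]
  simpa [sub_eq_neg_add] using h


section Abs

variable (b : K.obj 0) (m : ℕ)

lemma mem_ptSub_basept (n : ℕ) : K.basept b n ∈ (K.ptSub b).mem n := rfl

lemma ch_basept {b : K.obj 0} (hb : b ∈ N.mem 0) (n : ℕ) :
    K.simpChain ℤ K.topSub N 1 (K.basept b n) = 0 :=
  K.ch_zero N (K.mem_basept N hb n)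

lemma sph_cycle (x : K.Sph b m) :
    K.simpChain ℤ K.topSub (K.ptSub b) 1 x.1 ∈ K.pCycles ℤ K.topSub (K.ptSub b) (m + 1) :=
  K.ch_cycle _ fun i => by rw [x.2 i]; exact K.ch_basept _ rfl m

lemma sph_wd (x y : K.Sph b m) (h : K.Homotopic x.1 y.1) :
    K.homCls ℤ K.topSub (K.ptSub b) ⟨_, K.sph_cycle b m x⟩
      = K.homCls ℤ K.topSub (K.ptSub b) ⟨_, K.sph_cycle b m y⟩ := by
  obtain ⟨w, hw⟩ := h
  refine K.homCls_eq (K.ptSub b) _ _ ?_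
  have key : K.simpChain ℤ K.topSub (K.ptSub b) 1 x.1
      - K.simpChain ℤ K.topSub (K.ptSub b) 1 y.1
      ∈ K.pBoundaries ℤ K.topSub (K.ptSub b) (m + 1) := by
    refine K.homotopy_shape (K.ptSub b) w x.1 y.1 ?_ ?_ ?_
    · have := congrFun hw ⟨m + 1, by omega⟩
      simp only [bdry] at this
      rw [this]
      show K.homotopyTuple x.1 y.1 ⟨m + 1, by omega⟩ = x.1
      simp [homotopyTuple]
    · have := congrFun hw ⟨m + 2, by omega⟩
      simp only [bdry] at this
      rw [this]
      show K.homotopyTuple x.1 y.1 ⟨m + 2, by omega⟩ = y.1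
      simp [homotopyTuple]
    · intro i hi
      have := congrFun hw i
      simp only [bdry] at this
      rw [this]
      have he : K.homotopyTuple x.1 y.1 i = K.s m m (K.d m i x.1) := by
        simp only [homotopyTuple, if_pos hi]
      rw [he, x.2 ⟨(i : ℕ), by omega⟩]
      show K.simpChain ℤ K.topSub (K.ptSub b) 1 (K.s m m (K.basept b m)) = 0
      rw [K.s_basept b m m le_rfl]
      exact K.ch_basept _ rfl (m + 1)
  have := (K.pBoundaries ℤ K.topSub (K.ptSub b) (m + 1)).neg_mem key
  rw [neg_sub] at this
  exact this

/-- The absolute Hurewicz map. -/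
noncomputable def hurAbs : K.piGrp b m → K.Hpt b (m + 1) :=
  Quot.lift
    (fun x => K.homCls ℤ K.topSub (K.ptSub b) ⟨_, K.sph_cycle b m x⟩)
    (fun x y h => K.sph_wd b m x y h)

lemma hurAbs_char : K.HurewiczChar b m (K.hurAbs b m) := by
  intro x z hz
  show K.homCls ℤ K.topSub (K.ptSub b) ⟨_, K.sph_cycle b m x⟩ = _
  exact (congrArg _ (Subtype.ext hz)).symm

lemma ne_of_val {n a b : ℕ} (h : a < n) (hne : a ≠ b) : ((⟨a, h⟩ : Fin n) : ℕ) ≠ b := hne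

lemma hornCompat_of_sph {m : ℕ} (b : K.obj 0) (c : Fin (m + 3) → K.obj (m + 1)) (k : ℕ)
    (hc : ∀ j, K.IsSph b (c j)) : K.HornCompat k c := by
  intro i j _ _ hij
  have h1 := hc j ⟨(i : ℕ), by omega⟩
  have h2 := hc i ⟨(j : ℕ) - 1, by omega⟩
  exact h1.trans h2.symm

lemma abs_additive (hK : K.IsKan) (φ : K.piGrp b m → K.Hpt b (m + 1))
    (hφ : K.HurewiczChar b m φ) (mul : K.piGrp b m → K.piGrp b m → K.piGrp b m)
    (hmul : K.MulDescends b m mul) :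
    ∀ a a' : K.piGrp b m, φ (mul a a') = φ a + φ a' := by
  intro a a'
  induction a using Quot.ind with | mk x => ?_
  induction a' using Quot.ind with | mk y => ?_
  -- the horn
  set c : Fin (m + 3) → K.obj (m + 1) := K.mulTuple b x.1 y.1 (K.basept b (m + 1)) with hc
  have hcsph : ∀ j, K.IsSph b (c j) := by
    intro j
    simp only [hc, mulTuple]
    split_ifs
    · exact K.basept_isSph b m
    · exact y.2
    · exact K.basept_isSph b m
    · exact x.2
  obtain ⟨w, hw⟩ := hK (m + 1) (m + 1) (by omega) c (K.hornCompat_of_sph b c (m + 1) hcsph)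
  set z : K.obj (m + 1) := K.d (m + 1) (m + 1) w with hzdef
  have hcy : K.d (m + 1) m w = y.1 := by
    have := hw ⟨m, by omega⟩ (ne_of_val _ (by omega))
    rw [this]
    simp [hc, mulTuple]
  have hcx : K.d (m + 1) (m + 2) w = x.1 := by
    have := hw ⟨m + 2, by omega⟩ (ne_of_val _ (by omega))
    rw [this]
    simp [hc, mulTuple]
  have hcb : ∀ i : ℕ, i < m → K.d (m + 1) i w = K.basept b (m + 1) := by
    intro i hi
    have := hw ⟨i, by omega⟩ (ne_of_val _ (by omega))
    rw [this]
    simp [hc, mulTuple, hi]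
  have hzsph : K.IsSph b z := by
    intro i
    rcases Nat.lt_or_ge (i : ℕ) (m + 1) with hi | hi
    · have hdd := K.dd m (i : ℕ) (m + 1) hi (by omega) w
      rw [hzdef, hdd]
      have : (m + 1 - 1 : ℕ) = m := by omega
      rw [this]
      rcases Nat.lt_or_ge (i : ℕ) m with hi2 | hi2
      · rw [hcb i hi2]
        exact K.d_basept b m m (by omega)
      · have : (i : ℕ) = m := by omega
        rw [this, hcy]
        exact y.2 ⟨m, by omega⟩
    · have hieq : (i : ℕ) = m + 1 := by omega
      have hdd := K.dd m (m + 1) (m + 2) (by omega) (by omega) w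
      have : (m + 2 - 1 : ℕ) = m + 1 := by omega
      rw [this] at hdd
      rw [hieq, hzdef, ← hdd, hcx]
      exact x.2 ⟨m + 1, by omega⟩
  have hwit : K.MulWitness b x.1 y.1 z := by
    refine ⟨w, funext fun i => ?_⟩
    show K.d (m + 1) (i : ℕ) w = K.mulTuple b x.1 y.1 z i
    by_cases hi : (i : ℕ) = m + 1
    · have h2 : K.mulTuple b x.1 y.1 z i = z := by
        simp [mulTuple, hi]
      rw [h2, hi, hzdef]
    · rw [hw i hi]
      simp only [hc, mulTuple, if_neg hi]
  have hclsz := hmul x y ⟨z, hzsph⟩ hwit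
  show φ (mul (K.cls b m x) (K.cls b m y)) = φ (K.cls b m x) + φ (K.cls b m y)
  rw [hclsz]
  rw [hφ ⟨z, hzsph⟩ ⟨_, K.sph_cycle b m ⟨z, hzsph⟩⟩ rfl,
    hφ x ⟨_, K.sph_cycle b m x⟩ rfl, hφ y ⟨_, K.sph_cycle b m y⟩ rfl]
  refine K.homCls_eq (K.ptSub b) _ _ ?_
  show K.simpChain ℤ K.topSub (K.ptSub b) 1 x.1 + K.simpChain ℤ K.topSub (K.ptSub b) 1 y.1
      - K.simpChain ℤ K.topSub (K.ptSub b) 1 z ∈ _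
  refine K.mul_shape (K.ptSub b) w x.1 y.1 z hcy rfl hcx ?_
  intro i hi
  rw [hcb i hi]
  exact K.ch_basept _ rfl (m + 1)

end Abs

end SSetC

namespace SSetC
attribute [local instance] Classical.propDecidable

lemma chainMap_ch {K K' : SSetC} (f : SMap K K') (N : Subcomplex K) (N' : Subcomplex K')
    (hM : ∀ n x, x ∈ K.topSub.mem n → f.app n x ∈ K'.topSub.mem n) {n : ℕ} (x : K.obj n)
    (hN : x ∈ N.mem n → f.app n x ∈ N'.mem n) :
    pChainMap f ℤ K.topSub N K'.topSub N' hM n (K.simpChain ℤ K.topSub N 1 x)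
      = K'.simpChain ℤ K'.topSub N' 1 (f.app n x) := by
  by_cases hx : x ∈ N.mem n
  · rw [K.ch_zero N hx, map_zero, K'.ch_zero N' (hN hx)]
  · rw [K.ch_not_mem N hx]
    unfold pChainMap
    erw [Finsupp.liftAddHom_apply_single]
    by_cases h2 : f.app n x ∈ N'.mem n
    · rw [dif_pos h2, K'.ch_zero N' h2]; rfl
    · rw [dif_neg h2, K'.ch_not_mem N' h2]; rfl

lemma abs_natural {K K' : SSetC} (b : K.obj 0) (b' : K'.obj 0) (m : ℕ) (f : SMap K K')
    (hfb : f.app 0 b = b')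
    (φ : K.piGrp b m → K.Hpt b (m + 1)) (φ' : K'.piGrp b' m → K'.Hpt b' (m + 1))
    (F : K.piGrp b m → K'.piGrp b' m) (Ψ : K.Hpt b (m + 1) → K'.Hpt b' (m + 1))
    (hφ : K.HurewiczChar b m φ) (hφ' : K'.HurewiczChar b' m φ')
    (hF : Induces b b' m f F)
    (hM : ∀ n x, x ∈ K.topSub.mem n → f.app n x ∈ K'.topSub.mem n)
    (hΨ : HInduces f ℤ K.topSub (K.ptSub b) K'.topSub (K'.ptSub b') hM (m + 1) Ψ) :
    ∀ a : K.piGrp b m, Ψ (φ a) = φ' (F a) := by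
  intro a
  induction a using Quot.ind with | mk x => ?_
  have ysph : K'.IsSph b' (f.app (m + 1) x.1) := by
    intro i
    rw [← f.comm_d m (i : ℕ) (by omega) x.1, x.2 i, f.basept_app, hfb]
  have hFx := hF x ⟨f.app (m + 1) x.1, ysph⟩ rfl
  have hφx := hφ x ⟨_, K.sph_cycle b m x⟩ rfl
  have hφ'y := hφ' ⟨f.app (m + 1) x.1, ysph⟩
    ⟨_, K'.sph_cycle b' m ⟨f.app (m + 1) x.1, ysph⟩⟩ rfl
  have hchm := chainMap_ch f (K.ptSub b) (K'.ptSub b') hM x.1 (fun hx => by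
      show f.app (m + 1) x.1 = K'.basept b' (m + 1)
      have hxx : x.1 = K.basept b (m + 1) := hx
      rw [hxx, f.basept_app, hfb])
  have hΨz := hΨ ⟨_, K.sph_cycle b m x⟩
    ⟨_, K'.sph_cycle b' m ⟨f.app (m + 1) x.1, ysph⟩⟩ hchm.symm
  show Ψ (φ (K.cls b m x)) = φ' (F (K.cls b m x))
  rw [hφx, hΨz, hFx, hφ'y]

end SSetC

namespace SSetC
attribute [local instance] Classical.propDecidable

section Rel

variable (K : SSetC) (L : Subcomplex K) (b : K.obj 0) (m : ℕ)

lemma rel_cycle (hb : b ∈ L.mem 0) (x : K.RelSph L b m) :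
    K.simpChain ℤ K.topSub L 1 x.1 ∈ K.pCycles ℤ K.topSub L (m + 1) := by
  refine K.ch_cycle L fun i => ?_
  rcases Nat.eq_zero_or_pos (i : ℕ) with hi | hi
  · have : (i : ℕ) = 0 := hi
    rw [this]
    exact K.ch_zero L x.2.1
  · rw [x.2.2 i hi]
    exact K.ch_basept L hb m

lemma rel_wd (hb : b ∈ L.mem 0) (x y : K.RelSph L b m) (h : K.HomotopicRel L x.1 y.1) :
    K.homCls ℤ K.topSub L ⟨_, K.rel_cycle L b m hb x⟩
      = K.homCls ℤ K.topSub L ⟨_, K.rel_cycle L b m hb y⟩ := by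
  obtain ⟨_, _, _, hL, hLmem, w, hw⟩ := h
  refine K.homCls_eq L _ _ ?_
  have key : K.simpChain ℤ K.topSub L 1 x.1 - K.simpChain ℤ K.topSub L 1 y.1
      ∈ K.pBoundaries ℤ K.topSub L (m + 1) := by
    refine K.homotopy_shape L w x.1 y.1 ?_ ?_ ?_
    · have := congrFun hw ⟨m + 1, by omega⟩
      simp only [bdry] at this
      rw [this]
      show K.relTuple hL x.1 y.1 ⟨m + 1, by omega⟩ = x.1
      simp [relTuple]
    · have := congrFun hw ⟨m + 2, by omega⟩
      simp only [bdry] at this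
      rw [this]
      show K.relTuple hL x.1 y.1 ⟨m + 2, by omega⟩ = y.1
      simp [relTuple]
    · intro i hi
      have := congrFun hw i
      simp only [bdry] at this
      rw [this]
      rcases Nat.eq_zero_or_pos (i : ℕ) with h0 | h0
      · have he : K.relTuple hL x.1 y.1 i = hL := by simp [relTuple, h0]
        rw [he]
        exact K.ch_zero L hLmem
      · have he : K.relTuple hL x.1 y.1 i = K.s m m (K.d m i x.1) := by
          simp only [relTuple, if_neg (by omega : ¬ ((i : ℕ) = 0)), if_pos hi]
        rw [he, x.2.2 ⟨(i : ℕ), by omega⟩ h0]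
        show K.simpChain ℤ K.topSub L 1 (K.s m m (K.basept b m)) = 0
        rw [K.s_basept b m m le_rfl]
        exact K.ch_basept L hb (m + 1)
  have := (K.pBoundaries ℤ K.topSub L (m + 1)).neg_mem key
  rw [neg_sub] at this
  exact this

/-- The relative Hurewicz map. -/
noncomputable def hurRel (hb : b ∈ L.mem 0) : K.piRel L b m → K.Hrel L (m + 1) :=
  Quot.lift
    (fun x => K.homCls ℤ K.topSub L ⟨_, K.rel_cycle L b m hb x⟩)
    (fun x y h => K.rel_wd L b m hb x y h)

lemma hurRel_char (hb : b ∈ L.mem 0) : K.RelHurewiczChar L b m (K.hurRel L b m hb) := by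
  intro x z hz
  show K.homCls ℤ K.topSub L ⟨_, K.rel_cycle L b m hb x⟩ = _
  exact (congrArg _ (Subtype.ext hz)).symm

lemma rel_faces {m : ℕ} {x : K.obj (m + 2)} (hx : K.IsRelSph L b x) :
    ∀ k : ℕ, 1 ≤ k → k ≤ m + 2 → K.d (m + 1) k x = K.basept b (m + 1) :=
  fun k h1 h2 => hx.2 ⟨k, by omega⟩ h1

lemma d0_sph {m : ℕ} {y : K.obj (m + 2)} (hy : K.IsRelSph L b y) :
    K.IsSph b (K.d (m + 1) 0 y) := by
  intro i
  have hdd := K.dd m 0 ((i : ℕ) + 1) (by omega) (by omega) y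
  rw [Nat.add_sub_cancel] at hdd
  rw [← hdd, K.rel_faces L b hy ((i : ℕ) + 1) (Nat.le_add_left 1 _) (by omega)]
  exact K.d_basept b m 0 (by omega)

lemma rel_additive (hK : K.IsKan) (hLKan : L.IsKan) (hb : b ∈ L.mem 0)
    (mul : K.piRel L b (m + 1) → K.piRel L b (m + 1) → K.piRel L b (m + 1))
    (hmul : K.RelMulDescends L b m mul)
    (φ₁ : K.piRel L b (m + 1) → K.Hrel L (m + 2))
    (hφ₁ : K.RelHurewiczChar L b (m + 1) φ₁) :
    ∀ a a' : K.piRel L b (m + 1), φ₁ (mul a a') = φ₁ a + φ₁ a' := by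
  intro a a'
  induction a using Quot.ind with | mk x => ?_
  induction a' using Quot.ind with | mk y => ?_
  -- step 1: fill a horn inside L to get h
  set c' : Fin (m + 3) → K.obj (m + 1) := fun i =>
    if (i : ℕ) < m then K.basept b (m + 1)
    else if (i : ℕ) = m then K.d (m + 1) 0 y.1
    else if (i : ℕ) = m + 2 then K.d (m + 1) 0 x.1
    else K.basept b (m + 1) with hc'
  have hc'sph : ∀ j, K.IsSph b (c' j) := by
    intro j
    simp only [hc']
    split_ifs
    · exact K.basept_isSph b m
    · exact K.d0_sph L b y.2
    · exact K.d0_sph L b x.2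
    · exact K.basept_isSph b m
  have hc'mem : ∀ i : Fin (m + 3), (i : ℕ) ≠ m + 1 → c' i ∈ L.mem (m + 1) := by
    intro i _
    simp only [hc']
    split_ifs
    · exact K.mem_basept L hb (m + 1)
    · exact y.2.1
    · exact x.2.1
    · exact K.mem_basept L hb (m + 1)
  obtain ⟨h, hLmem, hh⟩ := hLKan (m + 1) (m + 1) (by omega) c' hc'mem
    (K.hornCompat_of_sph b c' (m + 1) hc'sph)
  -- step 2: fill the big horn in K
  set c : Fin (m + 4) → K.obj (m + 2) := K.relMulTuple b h x.1 y.1 (K.basept b (m + 2)) with hc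
  have hcfaces : ∀ j : Fin (m + 4), 1 ≤ (j : ℕ) →
      ∀ k : ℕ, 1 ≤ k → k ≤ m + 2 → K.d (m + 1) k (c j) = K.basept b (m + 1) := by
    intro j hj k hk1 hk2
    simp only [hc, relMulTuple, if_neg (by omega : ¬ ((j : ℕ) = 0))]
    split_ifs
    · exact K.d_basept b (m + 1) k (by omega)
    · exact K.rel_faces L b y.2 k hk1 hk2
    · exact K.d_basept b (m + 1) k (by omega)
    · exact K.rel_faces L b x.2 k hk1 hk2
  have hcompat : K.HornCompat (m + 2) c := by
    intro i j hi hj hij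
    rcases Nat.eq_zero_or_pos (i : ℕ) with h0 | h0
    · -- i = 0 : both sides are faces of h
      have hci : c i = h := by simp [hc, relMulTuple, h0]
      have hrhs : K.d (m + 1) ((j : ℕ) - 1) h = c' ⟨(j : ℕ) - 1, by omega⟩ :=
        hh ⟨(j : ℕ) - 1, by omega⟩ (ne_of_val _ (by omega))
      rw [h0, hci, hrhs]
      rcases Nat.lt_or_ge (j : ℕ) (m + 1) with hj2 | hj2
      · have hcj : c j = K.basept b (m + 2) := by
          simp only [hc, relMulTuple, if_neg (by omega : ¬ ((j : ℕ) = 0)), if_pos hj2]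
        have : c' ⟨(j : ℕ) - 1, by omega⟩ = K.basept b (m + 1) := by
          simp only [hc']
          rw [if_pos (show ((j : ℕ) - 1) < m by omega)]
        rw [hcj, this]
        exact K.d_basept b (m + 1) 0 (by omega)
      · rcases Nat.lt_or_ge (j : ℕ) (m + 2) with hj3 | hj3
        · have hjeq : (j : ℕ) = m + 1 := by omega
          have hcj : c j = y.1 := by
            simp [hc, relMulTuple, hjeq]
          have : c' ⟨(j : ℕ) - 1, by omega⟩ = K.d (m + 1) 0 y.1 := by
            simp only [hc']
            rw [if_neg (show ¬((j : ℕ) - 1 < m) by omega),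
              if_pos (show (j : ℕ) - 1 = m by omega)]
          rw [hcj, this]
        · have hjeq : (j : ℕ) = m + 3 := by omega
          have hcj : c j = x.1 := by
            simp only [hc, relMulTuple]
            rw [if_neg (show ¬((j : ℕ) = 0) by omega), if_neg (show ¬((j : ℕ) < m + 1) by omega),
              if_neg (show ¬((j : ℕ) = m + 1) by omega), if_neg (show ¬((j : ℕ) = m + 2) by omega)]
          have : c' ⟨(j : ℕ) - 1, by omega⟩ = K.d (m + 1) 0 x.1 := by
            simp only [hc']
            rw [if_neg (show ¬((j : ℕ) - 1 < m) by omega),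
              if_neg (show ¬((j : ℕ) - 1 = m) by omega),
              if_pos (show (j : ℕ) - 1 = m + 2 by omega)]
          rw [hcj, this]
    · rw [hcfaces j (by omega) (i : ℕ) h0 (by omega),
        hcfaces i h0 ((j : ℕ) - 1) (by omega) (by omega)]
  obtain ⟨w, hw⟩ := hK (m + 2) (m + 2) (by omega) c hcompat
  set z : K.obj (m + 2) := K.d (m + 2) (m + 2) w with hzdef
  have hc0 : K.d (m + 2) 0 w = h := by
    have := hw ⟨0, by omega⟩ (ne_of_val _ (by omega))
    rw [this]; simp [hc, relMulTuple]
  have hcbase : ∀ k : ℕ, 1 ≤ k → k ≤ m → K.d (m + 2) k w = K.basept b (m + 2) := by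
    intro k h1 h2
    have := hw ⟨k, by omega⟩ (ne_of_val _ (by omega))
    rw [this]
    simp only [hc, relMulTuple]
    rw [if_neg (show ¬(k = 0) by omega), if_pos (show k < m + 1 by omega)]
  have hcy : K.d (m + 2) (m + 1) w = y.1 := by
    have := hw ⟨m + 1, by omega⟩ (ne_of_val _ (by omega))
    rw [this]
    simp only [hc, relMulTuple]
    rw [if_neg (show ¬(m + 1 = 0) by omega), if_neg (show ¬(m + 1 < m + 1) by omega)]
    simp
  have hcx : K.d (m + 2) (m + 3) w = x.1 := by
    have := hw ⟨m + 3, by omega⟩ (ne_of_val _ (by omega))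
    rw [this]
    simp only [hc, relMulTuple]
    rw [if_neg (show ¬(m + 3 = 0) by omega), if_neg (show ¬(m + 3 < m + 1) by omega),
      if_neg (show ¬(m + 3 = m + 1) by omega), if_neg (show ¬(m + 3 = m + 2) by omega)]
  have hzrel : K.IsRelSph L b z := by
    constructor
    · have hdd := K.dd (m + 1) 0 (m + 2) (by omega) (by omega) w
      rw [show m + 2 - 1 = m + 1 from rfl] at hdd
      rw [hzdef, hdd, hc0]
      exact L.d_mem (m + 1) (m + 1) (by omega) h hLmem
    · intro i hi1
      rcases Nat.lt_or_ge (i : ℕ) (m + 2) with hi2 | hi2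
      · have hdd := K.dd (m + 1) (i : ℕ) (m + 2) hi2 (by omega) w
        rw [show m + 2 - 1 = m + 1 from rfl] at hdd
        rw [hzdef, hdd]
        rcases Nat.lt_or_ge (i : ℕ) (m + 1) with hi3 | hi3
        · rw [hcbase (i : ℕ) hi1 (by omega)]
          exact K.d_basept b (m + 1) (m + 1) (by omega)
        · have hieq : (i : ℕ) = m + 1 := by omega
          rw [hieq, hcy]
          exact K.rel_faces L b y.2 (m + 1) (by omega) (by omega)
      · have hieq : (i : ℕ) = m + 2 := by omega
        have hdd := K.dd (m + 1) (m + 2) (m + 3) (by omega) (by omega) w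
        rw [show m + 3 - 1 = m + 2 from rfl] at hdd
        rw [hieq, hzdef, ← hdd, hcx]
        exact K.rel_faces L b x.2 (m + 2) (by omega) (by omega)
  have hwit : K.RelMulWitness L b x.1 y.1 z := by
    refine ⟨h, hLmem, w, funext fun i => ?_⟩
    show K.d (m + 2) (i : ℕ) w = K.relMulTuple b h x.1 y.1 z i
    by_cases hi : (i : ℕ) = m + 2
    · have h2 : K.relMulTuple b h x.1 y.1 z i = z := by
        simp only [relMulTuple]
        rw [if_neg (show ¬((i : ℕ) = 0) by omega), if_neg (show ¬((i : ℕ) < m + 1) by omega),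
          if_neg (show ¬((i : ℕ) = m + 1) by omega), if_pos hi]
      rw [h2, hi, hzdef]
    · rw [hw i hi]
      simp only [hc, relMulTuple]
      by_cases h1 : (i : ℕ) = 0
      · rw [if_pos h1, if_pos h1]
      · rw [if_neg h1, if_neg h1]
        by_cases h2 : (i : ℕ) < m + 1
        · rw [if_pos h2, if_pos h2]
        · rw [if_neg h2, if_neg h2]
          by_cases h3 : (i : ℕ) = m + 1
          · rw [if_pos h3, if_pos h3]
          · rw [if_neg h3, if_neg h3, if_neg hi, if_neg hi]
  have hclsz := hmul x y ⟨z, hzrel⟩ hwit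
  show φ₁ (mul (K.relCls L b (m + 1) x) (K.relCls L b (m + 1) y))
      = φ₁ (K.relCls L b (m + 1) x) + φ₁ (K.relCls L b (m + 1) y)
  rw [hclsz, hφ₁ ⟨z, hzrel⟩ ⟨_, K.rel_cycle L b (m + 1) hb ⟨z, hzrel⟩⟩ rfl,
    hφ₁ x ⟨_, K.rel_cycle L b (m + 1) hb x⟩ rfl, hφ₁ y ⟨_, K.rel_cycle L b (m + 1) hb y⟩ rfl]
  refine K.homCls_eq L _ _ ?_
  show K.simpChain ℤ K.topSub L 1 x.1 + K.simpChain ℤ K.topSub L 1 y.1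
      - K.simpChain ℤ K.topSub L 1 z ∈ _
  refine K.mul_shape L w x.1 y.1 z hcy hzdef.symm hcx ?_
  intro i hi
  rcases Nat.eq_zero_or_pos (i : ℕ) with h0 | h0
  · rw [h0, hc0]
    exact K.ch_zero L hLmem
  · rw [hcbase (i : ℕ) h0 (by omega)]
    exact K.ch_basept L hb (m + 2)

lemma rel_natural {K K' : SSetC} (L : Subcomplex K) (L' : Subcomplex K')
    (b : K.obj 0) (b' : K'.obj 0) (m : ℕ) (f : SMap K K')
    (hb : b ∈ L.mem 0) (hfb : f.app 0 b = b')
    (hf : ∀ (n : ℕ), ∀ x ∈ L.mem n, f.app n x ∈ L'.mem n)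
    (φ : K.piRel L b m → K.Hrel L (m + 1)) (φ' : K'.piRel L' b' m → K'.Hrel L' (m + 1))
    (F : K.piRel L b m → K'.piRel L' b' m) (Ψ : K.Hrel L (m + 1) → K'.Hrel L' (m + 1))
    (hφ : K.RelHurewiczChar L b m φ) (hφ' : K'.RelHurewiczChar L' b' m φ')
    (hF : ∀ (x : K.RelSph L b m) (y : K'.RelSph L' b' m),
      f.app (m + 1) x.1 = y.1 → F (K.relCls L b m x) = K'.relCls L' b' m y)
    (hM : ∀ n x, x ∈ K.topSub.mem n → f.app n x ∈ K'.topSub.mem n)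
    (hΨ : HInduces f ℤ K.topSub L K'.topSub L' hM (m + 1) Ψ) :
    ∀ a : K.piRel L b m, Ψ (φ a) = φ' (F a) := by
  have hb' : b' ∈ L'.mem 0 := hfb ▸ hf 0 b hb
  intro a
  induction a using Quot.ind with | mk x => ?_
  have yrel : K'.IsRelSph L' b' (f.app (m + 1) x.1) := by
    constructor
    · rw [← f.comm_d m 0 (by omega) x.1]
      exact hf m _ x.2.1
    · intro i hi
      rw [← f.comm_d m (i : ℕ) (by omega) x.1, x.2.2 i hi, f.basept_app, hfb]
  have hFx := hF x ⟨f.app (m + 1) x.1, yrel⟩ rfl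
  have hφx := hφ x ⟨_, K.rel_cycle L b m hb x⟩ rfl
  have hφ'y := hφ' ⟨f.app (m + 1) x.1, yrel⟩
    ⟨_, K'.rel_cycle L' b' m hb' ⟨f.app (m + 1) x.1, yrel⟩⟩ rfl
  have hchm := chainMap_ch f L L' hM x.1 (fun hx => hf (m + 1) x.1 hx)
  have hΨz := hΨ ⟨_, K.rel_cycle L b m hb x⟩
    ⟨_, K'.rel_cycle L' b' m hb' ⟨f.app (m + 1) x.1, yrel⟩⟩ hchm.symm
  show Ψ (φ (K.relCls L b m x)) = φ' (F (K.relCls L b m x))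
  rw [hφx, hΨz, hFx, hφ'y]

end Rel

end SSetC

open SSetC in
/-- For every pointed Kan complex `(K,⋆)` and every pointed pair
`(K,L,⋆)` of Kan complexes, the Hurewicz map `φ([x]_π) := [x]_H` is a well-defined
natural group homomorphism `π_n(K,⋆) → H_n(K,⋆)` resp. `π_n(K,L,⋆) → H_n(K,L)`
(with integer coefficients), for `n = m+1 ≥ 1`:  it exists on the quotient
(well-definedness), is additive with respect to any product induced by horn
filling, and is compatible with the maps induced by (pointed, pairwise) simplicial
maps on homotopy and homology (naturality). -/
theorem hurewicz_welldefined (K : SSetC) (hK : K.IsKan) (b : K.obj 0)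
    (L : Subcomplex K) (hLKan : L.IsKan) (hb : b ∈ L.mem 0) (m : ℕ) :
    (∃ φ : K.piGrp b m → K.Hpt b (m + 1),
      K.HurewiczChar b m φ ∧
      (∀ mul : K.piGrp b m → K.piGrp b m → K.piGrp b m, K.MulDescends b m mul →
        ∀ a a' : K.piGrp b m, φ (mul a a') = φ a + φ a')) ∧
    (∀ (K' : SSetC) (b' : K'.obj 0) (f : SMap K K'), f.app 0 b = b' →
      ∀ (φ : K.piGrp b m → K.Hpt b (m + 1)) (φ' : K'.piGrp b' m → K'.Hpt b' (m + 1))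
        (F : K.piGrp b m → K'.piGrp b' m)
        (Ψ : K.Hpt b (m + 1) → K'.Hpt b' (m + 1)),
        K.HurewiczChar b m φ → K'.HurewiczChar b' m φ' → Induces b b' m f F →
        HInduces f ℤ K.topSub (K.ptSub b) K'.topSub (K'.ptSub b')
          (fun _ x _ => Set.mem_univ x) (m + 1) Ψ →
        ∀ a : K.piGrp b m, Ψ (φ a) = φ' (F a)) ∧
    (∃ φ : K.piRel L b m → K.Hrel L (m + 1),
      K.RelHurewiczChar L b m φ ∧
      (∀ mul : K.piRel L b (m + 1) → K.piRel L b (m + 1) → K.piRel L b (m + 1),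
        K.RelMulDescends L b m mul →
        ∀ (φ₁ : K.piRel L b (m + 1) → K.Hrel L (m + 2)),
          K.RelHurewiczChar L b (m + 1) φ₁ →
          ∀ a a' : K.piRel L b (m + 1), φ₁ (mul a a') = φ₁ a + φ₁ a')) ∧
    (∀ (K' : SSetC) (L' : Subcomplex K') (b' : K'.obj 0) (f : SMap K K'),
      f.app 0 b = b' → ∀ hf : ∀ (n : ℕ), ∀ x ∈ L.mem n, f.app n x ∈ L'.mem n,
      ∀ (φ : K.piRel L b m → K.Hrel L (m + 1)) (φ' : K'.piRel L' b' m → K'.Hrel L' (m + 1))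
        (F : K.piRel L b m → K'.piRel L' b' m)
        (Ψ : K.Hrel L (m + 1) → K'.Hrel L' (m + 1)),
        K.RelHurewiczChar L b m φ → K'.RelHurewiczChar L' b' m φ' →
        (∀ (x : K.RelSph L b m) (y : K'.RelSph L' b' m),
          f.app (m + 1) x.1 = y.1 → F (K.relCls L b m x) = K'.relCls L' b' m y) →
        HInduces f ℤ K.topSub L K'.topSub L'
          (fun _ x _ => Set.mem_univ x) (m + 1) Ψ →
        ∀ a : K.piRel L b m, Ψ (φ a) = φ' (F a)) := by
  refine ⟨⟨K.hurAbs b m, K.hurAbs_char b m, fun mul hmul a a' =>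
      K.abs_additive b m hK (K.hurAbs b m) (K.hurAbs_char b m) mul hmul a a'⟩,
    ?_, ⟨K.hurRel L b m hb, K.hurRel_char L b m hb, fun mul hmul φ₁ hφ₁ a a' =>
      K.rel_additive L b m hK hLKan hb mul hmul φ₁ hφ₁ a a'⟩, ?_⟩
  · intro K' b' f hfb φ φ' F Ψ hφ hφ' hF hΨ a
    exact abs_natural b b' m f hfb φ φ' F Ψ hφ hφ' hF (fun _ x _ => Set.mem_univ _) hΨ a
  · intro K' L' b' f hfb hf φ φ' F Ψ hφ hφ' hF hΨ a
    exact rel_natural L L' b b' m f hb hfb hf φ φ' F Ψ hφ hφ' hF (fun _ x _ => Set.mem_univ _) hΨ a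
end
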